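/- arXiv:1906.09464 — 3 statements merged into one kernel-verified Lean document; each statement's English description precedes it below -/
import Mathlib

section
/- Set L_P' = (1/(1 − α))(1 + βK/(1 − γ)). Then for every n ≥ 1, all θ, θ' ∈ Θ, and every probability measure μ on X with ∫ V dμ < ∞, one has σ_β(P_θ^n μ, P_{θ'}^n μ) ≤ L_P |θ − θ'| ( L_P' + (α^n/(α − γ)) β ∫ V dμ ). -/
open MeasureTheory ProbabilityTheory ENNReal

noncomputable section

namespace PoissonPaper

variable {X : Type*} [MeasurableSpace X]

/-- The weighted sup-norm `‖φ‖_β = sup_x |φ(x)| / (1 + β V(x))`, valued in `ℝ≥0∞`. -/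
def wnorm (β : ℝ) (V : X → ℝ) (φ : X → ℝ) : ℝ≥0∞ :=
  ⨆ x, ENNReal.ofReal (|φ x| / (1 + β * V x))

open Classical in
/-- The metric `d_β(x,y) = 2 + βV(x) + βV(y)` for `x ≠ y`, `0` on the diagonal. -/
def dBeta (β : ℝ) (V : X → ℝ) (x y : X) : ℝ :=
  if x = y then 0 else 2 + β * V x + β * V y

/-- The oscillation seminorm `|||φ|||_β = sup_{x ≠ y} |φ(x) - φ(y)| / d_β(x,y)`,
valued in `ℝ≥0∞`.  (For `x = y` the quotient is `0/0 = 0`, so the diagonal does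
not contribute.) -/
def osc (β : ℝ) (V : X → ℝ) (φ : X → ℝ) : ℝ≥0∞ :=
  ⨆ x, ⨆ y, ENNReal.ofReal (|φ x - φ y| / dBeta β V x y)

/-- Action of a kernel on functions: `(P*φ)(x) = ∫ φ(y) P(x,dy)`. -/
def act (P : Kernel X X) (φ : X → ℝ) : X → ℝ := fun x => ∫ y, φ y ∂(P x)

/-- Drift inequality `(P*V)(x) ≤ γ V(x) + K`, with the integral taken in the
lower-integral sense (recall `V ≥ 0`). -/
def Drift (P : Kernel X X) (V : X → ℝ) (γ K : ℝ) : Prop :=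
  ∀ x, ∫⁻ y, ENNReal.ofReal (V y) ∂(P x) ≤ ENNReal.ofReal (γ * V x + K)

instance bindIsFinite (μ : Measure X) [IsFiniteMeasure μ] (P : Kernel X X) [IsMarkovKernel P] :
    IsFiniteMeasure (μ.bind P) := by
  constructor
  rw [Measure.bind_apply MeasurableSet.univ (Kernel.measurable P).aemeasurable]
  calc ∫⁻ x, (P x) Set.univ ∂μ = ∫⁻ _, 1 ∂μ := by simp
    _ = μ Set.univ := by simp
    _ < ⊤ := measure_lt_top μ _

/-- The total variation measure `|μ₁ - μ₂|` of the difference of two finite measures. -/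
def tv (μ₁ μ₂ : Measure X) [IsFiniteMeasure μ₁] [IsFiniteMeasure μ₂] : Measure X :=
  (μ₁.toSignedMeasure - μ₂.toSignedMeasure).totalVariation

/-- `σ_β(μ₁, μ₂) = ∫ (1 + βV) d|μ₁ - μ₂|`. -/
def sigmaB (β : ℝ) (V : X → ℝ) (μ₁ μ₂ : Measure X) [IsFiniteMeasure μ₁] [IsFiniteMeasure μ₂] :
    ℝ :=
  ∫ x, (1 + β * V x) ∂(tv μ₁ μ₂)

/-- `σ_β(η) = ∫ (1 + βV) d|η|` for a finite signed measure `η`. -/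
def sigmaS (β : ℝ) (V : X → ℝ) (η : SignedMeasure X) : ℝ :=
  ∫ x, (1 + β * V x) ∂(η.totalVariation)

/-- `n`-fold iterate (power) of a kernel. -/
def kpow (P : Kernel X X) : ℕ → Kernel X X
  | 0 => Kernel.id
  | n + 1 => P ∘ₖ kpow P n

instance kpowIsMarkov (P : Kernel X X) [IsMarkovKernel P] : ∀ n, IsMarkovKernel (kpow P n)
  | 0 => by rw [kpow]; infer_instance
  | n + 1 => by have := kpowIsMarkov P n; rw [kpow]; infer_instance

/-- Action of a (Markov) kernel on finite signed measures, via the Jordan decomposition. -/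
def sbind (P : Kernel X X) [IsMarkovKernel P] (η : SignedMeasure X) : SignedMeasure X :=
  (η.toJordanDecomposition.posPart.bind P).toSignedMeasure -
    (η.toJordanDecomposition.negPart.bind P).toSignedMeasure


section Aux

variable (μ₁ μ₂ μ₃ : Measure X) [IsFiniteMeasure μ₁] [IsFiniteMeasure μ₂] [IsFiniteMeasure μ₃]

lemma ofReal_toReal_sub_add {a b : ℝ≥0∞} (ha : a ≠ ⊤) (hb : b ≤ a) :
    ENNReal.ofReal (a.toReal - b.toReal) + b = a := by
  rw [← ENNReal.toReal_sub_of_le hb ha,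
    ENNReal.ofReal_toReal (((tsub_le_self).trans_lt ha.lt_top).ne)]
  exact tsub_add_cancel_of_le hb

lemma sm_apply (μ₁ μ₂ : Measure X) [IsFiniteMeasure μ₁] [IsFiniteMeasure μ₂]
    {A : Set X} (hA : MeasurableSet A) :
    (μ₁.toSignedMeasure - μ₂.toSignedMeasure) A = (μ₁ A).toReal - (μ₂ A).toReal := by
  rw [VectorMeasure.sub_apply, Measure.toSignedMeasure_apply_measurable hA,
    Measure.toSignedMeasure_apply_measurable hA]
  rfl

lemma tv_hahn (μ₁ μ₂ : Measure X) [IsFiniteMeasure μ₁] [IsFiniteMeasure μ₂] :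
    ∃ S : Set X, MeasurableSet S ∧
      (tv μ₁ μ₂).restrict S + μ₂.restrict S = μ₁.restrict S ∧
      (tv μ₁ μ₂).restrict Sᶜ + μ₁.restrict Sᶜ = μ₂.restrict Sᶜ := by
  obtain ⟨i, hi₁, hi₂, hi₃, hpos, hneg⟩ :=
    (μ₁.toSignedMeasure - μ₂.toSignedMeasure).toJordanDecomposition_spec
  have key : ∀ B : Set X, MeasurableSet B →
      tv μ₁ μ₂ B = ENNReal.ofReal ((μ₁.toSignedMeasure - μ₂.toSignedMeasure) (i ∩ B))
        + ENNReal.ofReal (-((μ₁.toSignedMeasure - μ₂.toSignedMeasure) (iᶜ ∩ B))) := by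
    intro B hB
    rw [tv, SignedMeasure.totalVariation, Measure.add_apply, hpos, hneg,
      SignedMeasure.toMeasureOfZeroLE_apply _ _ _ hB,
      SignedMeasure.toMeasureOfLEZero_apply _ _ _ hB,
      ← ENNReal.ofReal_eq_coe_nnreal, ← ENNReal.ofReal_eq_coe_nnreal]
  refine ⟨i, hi₁, ?_, ?_⟩
  · ext A hA
    rw [Measure.add_apply, Measure.restrict_apply hA, Measure.restrict_apply hA,
      Measure.restrict_apply hA]
    have hAi : MeasurableSet (A ∩ i) := hA.inter hi₁
    have hsub : μ₂ (A ∩ i) ≤ μ₁ (A ∩ i) := by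
      have h0 : 0 ≤ (μ₁.toSignedMeasure - μ₂.toSignedMeasure) (A ∩ i) :=
        VectorMeasure.nonneg_of_zero_le_restrict _
          (VectorMeasure.zero_le_restrict_subset _ hi₁ Set.inter_subset_right hi₂)
      rw [sm_apply _ _ hAi, sub_nonneg] at h0
      exact (ENNReal.toReal_le_toReal (measure_ne_top _ _) (measure_ne_top _ _)).mp h0
    have h1 : i ∩ (A ∩ i) = A ∩ i := by ext x; simp; all_goals tauto
    have h2 : iᶜ ∩ (A ∩ i) = (∅ : Set X) := by ext x; simp; all_goals tauto
    rw [key _ hAi, h1, h2, VectorMeasure.empty, neg_zero, ENNReal.ofReal_zero, add_zero,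
      sm_apply _ _ hAi]
    exact ofReal_toReal_sub_add (measure_ne_top _ _) hsub
  · ext A hA
    rw [Measure.add_apply, Measure.restrict_apply hA, Measure.restrict_apply hA,
      Measure.restrict_apply hA]
    have hAi : MeasurableSet (A ∩ iᶜ) := hA.inter hi₁.compl
    have hsub : μ₁ (A ∩ iᶜ) ≤ μ₂ (A ∩ iᶜ) := by
      have h0 : (μ₁.toSignedMeasure - μ₂.toSignedMeasure) (A ∩ iᶜ) ≤ 0 :=
        VectorMeasure.nonpos_of_restrict_le_zero _
          (VectorMeasure.restrict_le_zero_subset _ hi₁.compl Set.inter_subset_right hi₃)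
      rw [sm_apply _ _ hAi, sub_nonpos] at h0
      exact (ENNReal.toReal_le_toReal (measure_ne_top _ _) (measure_ne_top _ _)).mp h0
    have h1 : iᶜ ∩ (A ∩ iᶜ) = A ∩ iᶜ := by ext x; simp; all_goals tauto
    have h2 : i ∩ (A ∩ iᶜ) = (∅ : Set X) := by ext x; simp; all_goals tauto
    rw [key _ hAi, h1, h2, VectorMeasure.empty, ENNReal.ofReal_zero, zero_add,
      sm_apply _ _ hAi, neg_sub]
    exact ofReal_toReal_sub_add (measure_ne_top _ _) hsub


lemma tv_comm : tv μ₁ μ₂ = tv μ₂ μ₁ := by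
  rw [tv, tv, ← SignedMeasure.totalVariation_neg, neg_sub]

lemma tv_self (μ : Measure X) [IsFiniteMeasure μ] : tv μ μ = 0 := by
  rw [tv, sub_self, SignedMeasure.totalVariation_zero]

lemma tv_hahn' : ∃ S : Set X, MeasurableSet S ∧
    (∀ A : Set X, MeasurableSet A →
      tv μ₁ μ₂ (A ∩ S) + μ₂ (A ∩ S) = μ₁ (A ∩ S)) ∧
    (∀ A : Set X, MeasurableSet A →
      tv μ₁ μ₂ (A ∩ Sᶜ) + μ₁ (A ∩ Sᶜ) = μ₂ (A ∩ Sᶜ)) := by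
  obtain ⟨S, hS, h1, h2⟩ := tv_hahn μ₁ μ₂
  refine ⟨S, hS, fun A hA => ?_, fun A hA => ?_⟩
  · have := congrArg (fun m : Measure X => m A) h1
    simpa [Measure.restrict_apply hA] using this
  · have := congrArg (fun m : Measure X => m A) h2
    simpa [Measure.restrict_apply hA] using this

lemma split_meas (μ : Measure X) (S A : Set X) (hS : MeasurableSet S) (hA : MeasurableSet A) :
    μ (A ∩ S) + μ (A ∩ Sᶜ) = μ A := by
  rw [show A ∩ Sᶜ = A \ S from (Set.diff_eq A S).symm]
  exact measure_inter_add_diff A hS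

lemma le_add_tv : μ₁ ≤ μ₂ + tv μ₁ μ₂ := by
  rw [Measure.le_iff]
  intro A hA
  obtain ⟨S, hS, h1, h2⟩ := tv_hahn' μ₁ μ₂
  have e1 := h1 A hA
  have e2 := h2 A hA
  have key : μ₁ A ≤ μ₂ A + tv μ₁ μ₂ A := by
    calc μ₁ A = μ₁ (A ∩ S) + μ₁ (A ∩ Sᶜ) := (split_meas μ₁ S A hS hA).symm
    _ ≤ (tv μ₁ μ₂ (A ∩ S) + μ₂ (A ∩ S)) + μ₂ (A ∩ Sᶜ) := by
        rw [e1]; refine add_le_add le_rfl ?_; exact e2 ▸ le_add_self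
    _ = (μ₂ (A ∩ S) + μ₂ (A ∩ Sᶜ)) + tv μ₁ μ₂ (A ∩ S) := by ring
    _ ≤ μ₂ A + tv μ₁ μ₂ A := by
        rw [split_meas μ₂ S A hS hA]
        gcongr
        exact Set.inter_subset_left
  simpa using key

lemma le_add_apply {A : Set X} : μ₁ A ≤ μ₂ A + tv μ₁ μ₂ A := by
  have := Measure.le_iff'.mp (le_add_tv μ₁ μ₂) A
  simpa using this

lemma tv_le_add : tv μ₁ μ₂ ≤ μ₁ + μ₂ := by
  rw [Measure.le_iff]
  intro A hA
  obtain ⟨S, hS, h1, h2⟩ := tv_hahn' μ₁ μ₂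
  calc tv μ₁ μ₂ A = tv μ₁ μ₂ (A ∩ S) + tv μ₁ μ₂ (A ∩ Sᶜ) := (split_meas _ S A hS hA).symm
  _ ≤ μ₁ (A ∩ S) + μ₂ (A ∩ Sᶜ) := by
      refine add_le_add ?_ ?_
      · exact le_trans le_self_add (h1 A hA).le
      · exact le_trans le_self_add (h2 A hA).le
  _ ≤ μ₁ A + μ₂ A := by
      gcongr <;> exact Set.inter_subset_left

lemma tv_triangle : tv μ₁ μ₃ ≤ tv μ₁ μ₂ + tv μ₂ μ₃ := by
  rw [Measure.le_iff]
  intro A hA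
  obtain ⟨S, hS, h1, h2⟩ := tv_hahn' μ₁ μ₃
  have c1 : tv μ₁ μ₃ (A ∩ S) ≤ tv μ₁ μ₂ (A ∩ S) + tv μ₂ μ₃ (A ∩ S) := by
    have u1 : μ₁ (A ∩ S) ≤ μ₂ (A ∩ S) + tv μ₁ μ₂ (A ∩ S) := le_add_apply μ₁ μ₂
    have u2 : μ₂ (A ∩ S) ≤ μ₃ (A ∩ S) + tv μ₂ μ₃ (A ∩ S) := le_add_apply μ₂ μ₃
    have : tv μ₁ μ₃ (A ∩ S) + μ₃ (A ∩ S) ≤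
        (tv μ₁ μ₂ (A ∩ S) + tv μ₂ μ₃ (A ∩ S)) + μ₃ (A ∩ S) := by
      rw [h1 A hA]
      calc μ₁ (A ∩ S) ≤ (μ₃ (A ∩ S) + tv μ₂ μ₃ (A ∩ S)) + tv μ₁ μ₂ (A ∩ S) :=
            le_trans u1 (by gcongr)
      _ = (tv μ₁ μ₂ (A ∩ S) + tv μ₂ μ₃ (A ∩ S)) + μ₃ (A ∩ S) := by ring
    exact (ENNReal.add_le_add_iff_right (measure_ne_top μ₃ _)).mp this
  have c2 : tv μ₁ μ₃ (A ∩ Sᶜ) ≤ tv μ₁ μ₂ (A ∩ Sᶜ) + tv μ₂ μ₃ (A ∩ Sᶜ) := by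
    have u1 : μ₃ (A ∩ Sᶜ) ≤ μ₂ (A ∩ Sᶜ) + tv μ₂ μ₃ (A ∩ Sᶜ) := by
      have := le_add_apply μ₃ μ₂ (A := A ∩ Sᶜ)
      rwa [tv_comm μ₃ μ₂] at this
    have u2 : μ₂ (A ∩ Sᶜ) ≤ μ₁ (A ∩ Sᶜ) + tv μ₁ μ₂ (A ∩ Sᶜ) := by
      have := le_add_apply μ₂ μ₁ (A := A ∩ Sᶜ)
      rwa [tv_comm μ₂ μ₁] at this
    have : tv μ₁ μ₃ (A ∩ Sᶜ) + μ₁ (A ∩ Sᶜ) ≤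
        (tv μ₁ μ₂ (A ∩ Sᶜ) + tv μ₂ μ₃ (A ∩ Sᶜ)) + μ₁ (A ∩ Sᶜ) := by
      rw [h2 A hA]
      calc μ₃ (A ∩ Sᶜ) ≤ (μ₁ (A ∩ Sᶜ) + tv μ₁ μ₂ (A ∩ Sᶜ)) + tv μ₂ μ₃ (A ∩ Sᶜ) :=
            le_trans u1 (by gcongr)
      _ = (tv μ₁ μ₂ (A ∩ Sᶜ) + tv μ₂ μ₃ (A ∩ Sᶜ)) + μ₁ (A ∩ Sᶜ) := by ring
    exact (ENNReal.add_le_add_iff_right (measure_ne_top μ₁ _)).mp this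
  have : tv μ₁ μ₃ A ≤ tv μ₁ μ₂ A + tv μ₂ μ₃ A := by
    calc tv μ₁ μ₃ A = tv μ₁ μ₃ (A ∩ S) + tv μ₁ μ₃ (A ∩ Sᶜ) := (split_meas _ S A hS hA).symm
    _ ≤ (tv μ₁ μ₂ (A ∩ S) + tv μ₂ μ₃ (A ∩ S)) + (tv μ₁ μ₂ (A ∩ Sᶜ) + tv μ₂ μ₃ (A ∩ Sᶜ)) :=
        add_le_add c1 c2
    _ = (tv μ₁ μ₂ (A ∩ S) + tv μ₁ μ₂ (A ∩ Sᶜ)) + (tv μ₂ μ₃ (A ∩ S) + tv μ₂ μ₃ (A ∩ Sᶜ)) := by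
        ring
    _ = tv μ₁ μ₂ A + tv μ₂ μ₃ A := by
        rw [split_meas _ S A hS hA, split_meas _ S A hS hA]
  simpa using this


end Aux

section Aux2

variable {β : ℝ} {V : X → ℝ}

/-- `F β V y = ofReal (1 + β V y)`. -/
def FF (β : ℝ) (V : X → ℝ) : X → ℝ≥0∞ := fun y => ENNReal.ofReal (1 + β * V y)

lemma FF_meas (hV : Measurable V) : Measurable (FF β V) :=
  (measurable_const.add (measurable_const.mul hV)).ennreal_ofReal

lemma FF_eq (hβ : 0 ≤ β) (hV0 : ∀ x, 0 ≤ V x) (x : X) :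
    FF β V x = 1 + ENNReal.ofReal β * ENNReal.ofReal (V x) := by
  rw [FF, ENNReal.ofReal_add zero_le_one (mul_nonneg hβ (hV0 x)), ENNReal.ofReal_one,
    ENNReal.ofReal_mul hβ]

lemma lintegral_FF (hV : Measurable V) (hβ : 0 ≤ β) (hV0 : ∀ x, 0 ≤ V x) (μ : Measure X) :
    ∫⁻ x, FF β V x ∂μ = μ Set.univ + ENNReal.ofReal β * ∫⁻ x, ENNReal.ofReal (V x) ∂μ := by
  simp_rw [FF_eq hβ hV0]
  rw [lintegral_add_left measurable_const, lintegral_const,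
    lintegral_const_mul _ hV.ennreal_ofReal, one_mul]

lemma FF_integrable (hβ : 0 ≤ β) (hV0 : ∀ x, 0 ≤ V x) (hV : Measurable V) {μ : Measure X}
    (h : ∫⁻ x, FF β V x ∂μ ≠ ⊤) : Integrable (fun x => 1 + β * V x) μ :=
  (lintegral_ofReal_ne_top_iff_integrable
    ((measurable_const.add (measurable_const.mul hV)).aestronglyMeasurable)
    (Filter.Eventually.of_forall fun x => by
      have := mul_nonneg hβ (hV0 x); simp only [Pi.zero_apply, Pi.add_apply, Pi.mul_apply]; linarith)).mp h

lemma sigmaB_nonneg (hβ : 0 ≤ β) (hV0 : ∀ x, 0 ≤ V x) (μ₁ μ₂ : Measure X)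
    [IsFiniteMeasure μ₁] [IsFiniteMeasure μ₂] : 0 ≤ sigmaB β V μ₁ μ₂ :=
  integral_nonneg fun x => by have := mul_nonneg hβ (hV0 x); simp only [Pi.zero_apply]; linarith

lemma sigmaB_eq (hβ : 0 ≤ β) (hV0 : ∀ x, 0 ≤ V x) (hV : Measurable V)
    (μ₁ μ₂ : Measure X) [IsFiniteMeasure μ₁] [IsFiniteMeasure μ₂]
    (h : ∫⁻ x, FF β V x ∂(tv μ₁ μ₂) ≠ ⊤) :
    ENNReal.ofReal (sigmaB β V μ₁ μ₂) = ∫⁻ x, FF β V x ∂(tv μ₁ μ₂) :=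
  ofReal_integral_eq_lintegral_ofReal (FF_integrable hβ hV0 hV h)
    (Filter.Eventually.of_forall fun x => by
      have := mul_nonneg hβ (hV0 x); simp only [Pi.zero_apply]; linarith)

end Aux2


section Aux3

variable {β γ K : ℝ} {V : X → ℝ}

instance bindIsProb (μ : Measure X) [IsProbabilityMeasure μ] (P : Kernel X X)
    [IsMarkovKernel P] : IsProbabilityMeasure (μ.bind P) := by
  constructor
  rw [Measure.bind_apply MeasurableSet.univ (Kernel.measurable P).aemeasurable]
  simp

lemma bind_kpow_zero (μ : Measure X) (P : Kernel X X) [IsMarkovKernel P] :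
    μ.bind (kpow P 0) = μ := by
  have h : ⇑(kpow P 0) = fun x : X => Measure.dirac x := by
    funext x; rw [kpow, Kernel.id_apply]
  rw [h]
  exact Measure.bind_dirac

lemma bind_kpow_succ (μ : Measure X) (P : Kernel X X) [IsMarkovKernel P] (n : ℕ) :
    μ.bind (kpow P (n + 1)) = (μ.bind (kpow P n)).bind P := by
  have h : ⇑(kpow P (n + 1)) = fun x : X => ((kpow P n) x).bind P := by
    funext x; rw [kpow, Kernel.comp_apply]
  rw [h, ← Measure.bind_bind (Kernel.measurable _).aemeasurable (Kernel.measurable _).aemeasurable]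

lemma drift_bind (P : Kernel X X) [IsMarkovKernel P] (hd : Drift P V γ K)
    (hγ0 : 0 ≤ γ) (hK : 0 ≤ K) (hV0 : ∀ x, 0 ≤ V x) (hV : Measurable V)
    (ν : Measure X) [IsProbabilityMeasure ν] :
    ∫⁻ x, ENNReal.ofReal (V x) ∂(ν.bind P) ≤
      ENNReal.ofReal γ * ∫⁻ x, ENNReal.ofReal (V x) ∂ν + ENNReal.ofReal K := by
  rw [Measure.lintegral_bind (Kernel.measurable P).aemeasurable hV.ennreal_ofReal.aemeasurable]
  calc ∫⁻ x, ∫⁻ y, ENNReal.ofReal (V y) ∂(P x) ∂ν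
      ≤ ∫⁻ x, ENNReal.ofReal (γ * V x + K) ∂ν := lintegral_mono fun x => hd x
  _ = ∫⁻ x, (ENNReal.ofReal γ * ENNReal.ofReal (V x) + ENNReal.ofReal K) ∂ν := by
      congr 1; funext x
      rw [ENNReal.ofReal_add (mul_nonneg hγ0 (hV0 x)) hK, ENNReal.ofReal_mul hγ0]
  _ = ENNReal.ofReal γ * ∫⁻ x, ENNReal.ofReal (V x) ∂ν + ENNReal.ofReal K := by
      rw [lintegral_add_right _ measurable_const, lintegral_const,
        lintegral_const_mul _ hV.ennreal_ofReal, measure_univ, mul_one]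

lemma drift_kpow (P : Kernel X X) [IsMarkovKernel P] (hd : Drift P V γ K)
    (hγ : γ ∈ Set.Ioo (0:ℝ) 1) (hK : 0 ≤ K) (hV0 : ∀ x, 0 ≤ V x) (hV : Measurable V)
    (μ : Measure X) [IsProbabilityMeasure μ] (n : ℕ) :
    ∫⁻ x, ENNReal.ofReal (V x) ∂(μ.bind (kpow P n)) ≤
      ENNReal.ofReal (γ ^ n) * ∫⁻ x, ENNReal.ofReal (V x) ∂μ
        + ENNReal.ofReal (K / (1 - γ)) := by
  induction n with
  | zero =>
    rw [bind_kpow_zero]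
    simp only [pow_zero, ENNReal.ofReal_one, one_mul]
    exact le_add_right le_rfl
  | succ n ih =>
    rw [bind_kpow_succ]
    calc ∫⁻ x, ENNReal.ofReal (V x) ∂((μ.bind (kpow P n)).bind P)
        ≤ ENNReal.ofReal γ * ∫⁻ x, ENNReal.ofReal (V x) ∂(μ.bind (kpow P n))
            + ENNReal.ofReal K := drift_bind P hd hγ.1.le hK hV0 hV _
    _ ≤ ENNReal.ofReal γ * (ENNReal.ofReal (γ ^ n) * ∫⁻ x, ENNReal.ofReal (V x) ∂μ
            + ENNReal.ofReal (K / (1 - γ))) + ENNReal.ofReal K := by gcongr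
    _ = ENNReal.ofReal (γ ^ (n + 1)) * ∫⁻ x, ENNReal.ofReal (V x) ∂μ
            + (ENNReal.ofReal γ * ENNReal.ofReal (K / (1 - γ)) + ENNReal.ofReal K) := by
        rw [mul_add, ← mul_assoc, ← ENNReal.ofReal_mul hγ.1.le, ← pow_succ']
        ring
    _ = ENNReal.ofReal (γ ^ (n + 1)) * ∫⁻ x, ENNReal.ofReal (V x) ∂μ
            + ENNReal.ofReal (K / (1 - γ)) := by
        congr 1
        rw [← ENNReal.ofReal_mul hγ.1.le, ← ENNReal.ofReal_add
          (mul_nonneg hγ.1.le (div_nonneg hK (by linarith [hγ.2]))) hK]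
        have h1 : (1:ℝ) - γ ≠ 0 := by linarith [hγ.2]
        congr 1
        field_simp
        ring

end Aux3


section Aux4

variable {β γ K : ℝ} {V : X → ℝ}

lemma kernel_FF_fin (Q : Kernel X X) [IsMarkovKernel Q] (hd : Drift Q V γ K)
    (hβ : 0 ≤ β) (hV0 : ∀ x, 0 ≤ V x) (hV : Measurable V) (x : X) :
    ∫⁻ y, FF β V y ∂(Q x) ≠ ⊤ := by
  rw [lintegral_FF hV hβ hV0]
  exact ENNReal.add_ne_top.mpr ⟨by simp,
    ENNReal.mul_ne_top ENNReal.ofReal_ne_top ((hd x).trans_lt ENNReal.ofReal_lt_top).ne⟩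

lemma tv_FF_fin (μ₁ μ₂ : Measure X) [IsFiniteMeasure μ₁] [IsFiniteMeasure μ₂]
    (h₁ : ∫⁻ y, FF β V y ∂μ₁ ≠ ⊤) (h₂ : ∫⁻ y, FF β V y ∂μ₂ ≠ ⊤) :
    ∫⁻ y, FF β V y ∂(tv μ₁ μ₂) ≠ ⊤ := by
  have : ∫⁻ y, FF β V y ∂(tv μ₁ μ₂) ≤ ∫⁻ y, FF β V y ∂μ₁ + ∫⁻ y, FF β V y ∂μ₂ := by
    calc ∫⁻ y, FF β V y ∂(tv μ₁ μ₂) ≤ ∫⁻ y, FF β V y ∂(μ₁ + μ₂) :=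
          lintegral_mono' (tv_le_add μ₁ μ₂) le_rfl
    _ = _ := lintegral_add_measure _ _ _
  exact (this.trans_lt (ENNReal.add_lt_top.mpr ⟨h₁.lt_top, h₂.lt_top⟩)).ne

lemma bind_FF_fin (Q : Kernel X X) [IsMarkovKernel Q] (hd : Drift Q V γ K)
    (hβ : 0 ≤ β) (hγ0 : 0 ≤ γ) (hK : 0 ≤ K) (hV0 : ∀ x, 0 ≤ V x) (hV : Measurable V)
    (ν : Measure X) [IsProbabilityMeasure ν]
    (hν : ∫⁻ x, ENNReal.ofReal (V x) ∂ν ≠ ⊤) :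
    ∫⁻ y, FF β V y ∂(ν.bind Q) ≠ ⊤ := by
  rw [lintegral_FF hV hβ hV0]
  refine ENNReal.add_ne_top.mpr ⟨by simp, ENNReal.mul_ne_top ENNReal.ofReal_ne_top ?_⟩
  refine ((drift_bind Q hd hγ0 hK hV0 hV ν).trans_lt ?_).ne
  exact ENNReal.add_lt_top.mpr
    ⟨ENNReal.mul_lt_top ENNReal.ofReal_lt_top hν.lt_top, ENNReal.ofReal_lt_top⟩

lemma bindLip (hβ : 0 < β) (hV0 : ∀ x, 0 ≤ V x) (hV : Measurable V)
    (hγ : γ ∈ Set.Ioo (0:ℝ) 1) (hK : 0 ≤ K)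
    (P P' : Kernel X X) [IsMarkovKernel P] [IsMarkovKernel P']
    (hd : Drift P V γ K) (hd' : Drift P' V γ K)
    (c : ℝ) (hc : 0 ≤ c)
    (hlip : ∀ x, sigmaB β V (P x) (P' x) ≤ c * (1 + β * V x))
    (ν : Measure X) [IsProbabilityMeasure ν]
    (hν : ∫⁻ x, ENNReal.ofReal (V x) ∂ν ≠ ⊤) :
    ∫⁻ x, FF β V x ∂(tv (ν.bind P) (ν.bind P')) ≤
      ENNReal.ofReal c * ∫⁻ x, FF β V x ∂ν := by
  have hFm : Measurable (FF β V) := FF_meas hV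
  have hx : ∀ x, ∫⁻ y, FF β V y ∂(tv (P x) (P' x)) ≤ ENNReal.ofReal c * FF β V x := by
    intro x
    rw [← sigmaB_eq hβ.le hV0 hV _ _
      (tv_FF_fin _ _ (kernel_FF_fin P hd hβ.le hV0 hV x) (kernel_FF_fin P' hd' hβ.le hV0 hV x))]
    calc ENNReal.ofReal (sigmaB β V (P x) (P' x)) ≤ ENNReal.ofReal (c * (1 + β * V x)) :=
          ENNReal.ofReal_le_ofReal (hlip x)
    _ = ENNReal.ofReal c * FF β V x := ENNReal.ofReal_mul hc
  obtain ⟨S, hS, h1, h2⟩ := tv_hahn (ν.bind P) (ν.bind P')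
  set G : X → ℝ≥0∞ := S.indicator (FF β V) with hG
  set H : X → ℝ≥0∞ := Sᶜ.indicator (FF β V) with hH
  have hGm : Measurable G := hFm.indicator hS
  have hHm : Measurable H := hFm.indicator hS.compl
  have hGH : G + H = FF β V := Set.indicator_self_add_compl S (FF β V)
  have hfinP : ∫⁻ y, FF β V y ∂(ν.bind P) ≠ ⊤ :=
    bind_FF_fin P hd hβ.le hγ.1.le hK hV0 hV ν hν
  have hfinP' : ∫⁻ y, FF β V y ∂(ν.bind P') ≠ ⊤ :=
    bind_FF_fin P' hd' hβ.le hγ.1.le hK hV0 hV ν hν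
  -- upper bounds on the indicator pieces over the binds
  have k1 : ∫⁻ y, G y ∂(ν.bind P) ≤ ∫⁻ y, G y ∂(ν.bind P')
      + ∫⁻ x, (∫⁻ y, G y ∂(tv (P x) (P' x))) ∂ν := by
    rw [Measure.lintegral_bind (Kernel.measurable P).aemeasurable hGm.aemeasurable,
      Measure.lintegral_bind (Kernel.measurable P').aemeasurable hGm.aemeasurable]
    calc ∫⁻ x, ∫⁻ y, G y ∂(P x) ∂ν
        ≤ ∫⁻ x, (∫⁻ y, G y ∂(P' x) + ∫⁻ y, G y ∂(tv (P x) (P' x))) ∂ν := by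
          refine lintegral_mono fun x => ?_
          calc ∫⁻ y, G y ∂(P x) ≤ ∫⁻ y, G y ∂((P' x) + tv (P x) (P' x)) :=
                lintegral_mono' (le_add_tv _ _) le_rfl
          _ = _ := lintegral_add_measure _ _ _
    _ = _ := lintegral_add_left (Measurable.lintegral_kernel (κ := P') hGm) _
  have k2 : ∫⁻ y, H y ∂(ν.bind P') ≤ ∫⁻ y, H y ∂(ν.bind P)
      + ∫⁻ x, (∫⁻ y, H y ∂(tv (P x) (P' x))) ∂ν := by
    rw [Measure.lintegral_bind (Kernel.measurable P').aemeasurable hHm.aemeasurable,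
      Measure.lintegral_bind (Kernel.measurable P).aemeasurable hHm.aemeasurable]
    calc ∫⁻ x, ∫⁻ y, H y ∂(P' x) ∂ν
        ≤ ∫⁻ x, (∫⁻ y, H y ∂(P x) + ∫⁻ y, H y ∂(tv (P x) (P' x))) ∂ν := by
          refine lintegral_mono fun x => ?_
          calc ∫⁻ y, H y ∂(P' x) ≤ ∫⁻ y, H y ∂((P x) + tv (P' x) (P x)) :=
                lintegral_mono' (le_add_tv _ _) le_rfl
          _ = ∫⁻ y, H y ∂((P x) + tv (P x) (P' x)) := by rw [tv_comm]
          _ = _ := lintegral_add_measure _ _ _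
    _ = _ := lintegral_add_left (Measurable.lintegral_kernel (κ := P) hHm) _
  -- the Hahn decomposition identities, in lintegral form
  have A1 : ∫⁻ y, G y ∂(tv (ν.bind P) (ν.bind P')) + ∫⁻ y, G y ∂(ν.bind P')
      = ∫⁻ y, G y ∂(ν.bind P) := by
    have e := congrArg (fun m : Measure X => ∫⁻ y, FF β V y ∂m) h1
    simp only [lintegral_add_measure] at e
    simpa only [hG, lintegral_indicator hS] using e
  have A2 : ∫⁻ y, H y ∂(tv (ν.bind P) (ν.bind P')) + ∫⁻ y, H y ∂(ν.bind P)
      = ∫⁻ y, H y ∂(ν.bind P') := by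
    have e := congrArg (fun m : Measure X => ∫⁻ y, FF β V y ∂m) h2
    simp only [lintegral_add_measure] at e
    simpa only [hH, lintegral_indicator hS.compl] using e
  have hGfin : ∫⁻ y, G y ∂(ν.bind P') ≠ ⊤ :=
    (lt_of_le_of_lt (lintegral_mono fun y => Set.indicator_le_self _ _ _) hfinP'.lt_top).ne
  have hHfin : ∫⁻ y, H y ∂(ν.bind P) ≠ ⊤ :=
    (lt_of_le_of_lt (lintegral_mono fun y => Set.indicator_le_self _ _ _) hfinP.lt_top).ne
  have T1 : ∫⁻ y, G y ∂(tv (ν.bind P) (ν.bind P'))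
      ≤ ∫⁻ x, (∫⁻ y, G y ∂(tv (P x) (P' x))) ∂ν := by
    refine (ENNReal.add_le_add_iff_right hGfin).mp ?_
    rw [A1]
    exact k1.trans (by rw [add_comm])
  have T2 : ∫⁻ y, H y ∂(tv (ν.bind P) (ν.bind P'))
      ≤ ∫⁻ x, (∫⁻ y, H y ∂(tv (P x) (P' x))) ∂ν := by
    refine (ENNReal.add_le_add_iff_right hHfin).mp ?_
    rw [A2]
    exact k2.trans (by rw [add_comm])
  calc ∫⁻ y, FF β V y ∂(tv (ν.bind P) (ν.bind P'))
      = ∫⁻ y, G y ∂(tv (ν.bind P) (ν.bind P'))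
        + ∫⁻ y, H y ∂(tv (ν.bind P) (ν.bind P')) := by
        rw [← lintegral_add_left hGm]
        congr 1
        funext y
        exact (congrFun hGH y).symm
  _ ≤ ∫⁻ x, (∫⁻ y, G y ∂(tv (P x) (P' x))) ∂ν
        + ∫⁻ x, (∫⁻ y, H y ∂(tv (P x) (P' x))) ∂ν := add_le_add T1 T2
  _ ≤ ∫⁻ x, ((∫⁻ y, G y ∂(tv (P x) (P' x))) + (∫⁻ y, H y ∂(tv (P x) (P' x)))) ∂ν :=
        le_lintegral_add _ _
  _ = ∫⁻ x, (∫⁻ y, FF β V y ∂(tv (P x) (P' x))) ∂ν := by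
        refine lintegral_congr fun x => ?_
        rw [← lintegral_add_left hGm]
        exact lintegral_congr fun a => congrFun hGH a
  _ ≤ ∫⁻ x, ENNReal.ofReal c * FF β V x ∂ν := lintegral_mono hx
  _ = ENNReal.ofReal c * ∫⁻ x, FF β V x ∂ν := lintegral_const_mul _ hFm

end Aux4


section Aux5

lemma sum_shift (a : ℝ) (f : ℕ → ℝ) (n : ℕ) :
    ∑ i ∈ Finset.range (n + 1), a ^ (n - i) * f i
      = a * ∑ i ∈ Finset.range n, a ^ (n - 1 - i) * f i + f n := by
  rw [Finset.sum_range_succ, Nat.sub_self, pow_zero, one_mul, Finset.mul_sum]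
  congr 1
  refine Finset.sum_congr rfl fun i hi => ?_
  have hi' : i < n := Finset.mem_range.mp hi
  have h : n - i = (n - 1 - i) + 1 := by omega
  rw [h, pow_succ', mul_assoc]

lemma geom_cross (α γ : ℝ) (n : ℕ) :
    (∑ i ∈ Finset.range n, α ^ (n - 1 - i) * γ ^ i) * (α - γ) = α ^ n - γ ^ n := by
  induction n with
  | zero => simp
  | succ n ih =>
    simp only [Nat.add_sub_cancel]
    rw [sum_shift α (fun i => γ ^ i) n]
    linear_combination α * ih

lemma gsum_le {α γ K β r : ℝ} (hγ : γ ∈ Set.Ioo (0:ℝ) 1) (hα : α ∈ Set.Ioo γ 1)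
    (hK : 0 ≤ K) (hβ : 0 ≤ β) (hr : 0 ≤ r) (n : ℕ) :
    ∑ i ∈ Finset.range n, α ^ (n - 1 - i) * (1 + β * (γ ^ i * r + K / (1 - γ)))
      ≤ (1 / (1 - α)) * (1 + β * (K / (1 - γ))) + (α ^ n / (α - γ)) * β * r := by
  have hα0 : 0 < α := hγ.1.trans hα.1
  have h1α : 0 < 1 - α := by linarith [hα.2]
  have hαγ : 0 < α - γ := by linarith [hα.1]
  have hC : 0 ≤ 1 + β * (K / (1 - γ)) := by
    have : 0 ≤ K / (1 - γ) := div_nonneg hK (by linarith [hγ.2])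
    nlinarith
  have split : ∀ i : ℕ, α ^ (n - 1 - i) * (1 + β * (γ ^ i * r + K / (1 - γ)))
      = α ^ (n - 1 - i) * (1 + β * (K / (1 - γ))) + (α ^ (n - 1 - i) * γ ^ i) * (β * r) := by
    intro i; ring
  rw [Finset.sum_congr rfl fun i _ => split i, Finset.sum_add_distrib]
  have hgeom : ∑ i ∈ Finset.range n, α ^ (n - 1 - i) ≤ 1 / (1 - α) := by
    have hre : ∑ i ∈ Finset.range n, α ^ (n - 1 - i) = ∑ i ∈ Finset.range n, α ^ i := by
      have := Finset.sum_range_reflect (fun j => α ^ j) n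
      simpa using this
    rw [hre, geom_sum_eq (by linarith : α ≠ 1)]
    have e : (α ^ n - 1) / (α - 1) = (1 - α ^ n) / (1 - α) := by
      rw [div_eq_div_iff (by linarith) (by linarith)]; ring
    rw [e, div_le_div_iff₀ h1α h1α]
    nlinarith [pow_nonneg hα0.le n]
  have hcross : ∑ i ∈ Finset.range n, α ^ (n - 1 - i) * γ ^ i ≤ α ^ n / (α - γ) := by
    have h := geom_cross α γ n
    have h2 : ∑ i ∈ Finset.range n, α ^ (n - 1 - i) * γ ^ i = (α ^ n - γ ^ n) / (α - γ) := by
      rw [eq_div_iff hαγ.ne']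
      exact h
    rw [h2, div_le_div_iff₀ hαγ hαγ]
    nlinarith [pow_nonneg hγ.1.le n]
  calc (∑ i ∈ Finset.range n, α ^ (n - 1 - i) * (1 + β * (K / (1 - γ))))
        + ∑ i ∈ Finset.range n, (α ^ (n - 1 - i) * γ ^ i) * (β * r)
      ≤ (1 / (1 - α)) * (1 + β * (K / (1 - γ))) + (α ^ n / (α - γ)) * (β * r) := by
        gcongr ?_ + ?_
        · rw [← Finset.sum_mul]
          exact mul_le_mul_of_nonneg_right hgeom hC
        · rw [← Finset.sum_mul]
          exact mul_le_mul_of_nonneg_right hcross (mul_nonneg hβ hr)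
  _ = (1 / (1 - α)) * (1 + β * (K / (1 - γ))) + (α ^ n / (α - γ)) * β * r := by ring

end Aux5


/-- Lipschitz continuity in the parameter of the iterated kernels. -/
theorem iterated_kernel_lipschitz
    {X : Type*} [MeasurableSpace X] {k : ℕ} {Θ : Set (EuclideanSpace ℝ (Fin k))}
    (hΘ : Θ.Nonempty) (P : Θ → Kernel X X) [∀ θ, IsMarkovKernel (P θ)]
    (V : X → ℝ) (hVmeas : Measurable V) (hV0 : ∀ x, 0 ≤ V x)
    (β : ℝ) (hβ : 0 < β)
    (γ K : ℝ) (hγ : γ ∈ Set.Ioo (0:ℝ) 1) (hK : 0 ≤ K) (hdrift : ∀ θ, Drift (P θ) V γ K)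
    (L_P : ℝ)
    (hlip : ∀ θ θ' : Θ, ∀ x,
      sigmaB β V ((P θ) x) ((P θ') x) ≤ L_P * ‖θ.1 - θ'.1‖ * (1 + β * V x))
    (α : ℝ) (hα : α ∈ Set.Ioo γ 1)
    (hsig : ∀ θ, ∀ (μ₁ μ₂ : Measure X) [IsProbabilityMeasure μ₁] [IsProbabilityMeasure μ₂],
      Integrable V μ₁ → Integrable V μ₂ →
      sigmaB β V (μ₁.bind (P θ)) (μ₂.bind (P θ)) ≤ α * sigmaB β V μ₁ μ₂) :
    ∀ n : ℕ, 1 ≤ n → ∀ θ θ' : Θ,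
      ∀ (μ : Measure X) [IsProbabilityMeasure μ], Integrable V μ →
      sigmaB β V (μ.bind (kpow (P θ) n)) (μ.bind (kpow (P θ') n)) ≤
        L_P * ‖θ.1 - θ'.1‖ *
          ((1 / (1 - α)) * (1 + β * (K / (1 - γ))) +
            (α ^ n / (α - γ)) * β * ∫ x, V x ∂μ) := by
  intro n hn θ θ' μ instμ hIntV
  by_cases hθ : θ = θ'
  · subst hθ
    have h0 : sigmaB β V (μ.bind (kpow (P θ) n)) (μ.bind (kpow (P θ) n)) = 0 := by
      rw [sigmaB, tv_self, integral_zero_measure]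
    simp only [h0, sub_self, norm_zero, mul_zero, zero_mul, le_refl]
  · have hα0 : 0 < α := hγ.1.trans hα.1
    have h1γ : 0 < 1 - γ := by linarith [hγ.2]
    have h1α : 0 < 1 - α := by linarith [hα.2]
    have hαγ : 0 < α - γ := by linarith [hα.1]
    have hne : θ.1 ≠ θ'.1 := fun h => hθ (Subtype.ext h)
    have hX : Nonempty X := by
      by_contra h
      have h1 : μ Set.univ = 1 := measure_univ
      rw [Set.univ_eq_empty_iff.mpr (not_nonempty_iff.mp h), measure_empty] at h1
      exact zero_ne_one h1
    obtain ⟨x₀⟩ := hX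
    set c := L_P * ‖θ.1 - θ'.1‖ with hcdef
    have hc : 0 ≤ c := by
      have h1 := hlip θ θ' x₀
      have h2 : 0 ≤ sigmaB β V ((P θ) x₀) ((P θ') x₀) := sigmaB_nonneg hβ.le hV0 _ _
      have ht : 0 < 1 + β * V x₀ := by nlinarith [hV0 x₀, hβ.le]
      exact (mul_nonneg_iff_of_pos_right ht).mp (h2.trans h1)
    set r := ∫ x, V x ∂μ with hrdef
    have hr : 0 ≤ r := integral_nonneg hV0
    have hM : ∫⁻ x, ENNReal.ofReal (V x) ∂μ = ENNReal.ofReal r :=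
      (ofReal_integral_eq_lintegral_ofReal hIntV (Filter.Eventually.of_forall hV0)).symm
    have hVn : ∀ (ϑ : Θ) (m : ℕ), ∫⁻ x, ENNReal.ofReal (V x) ∂(μ.bind (kpow (P ϑ) m))
        ≤ ENNReal.ofReal (γ ^ m) * ENNReal.ofReal r + ENNReal.ofReal (K / (1 - γ)) := by
      intro ϑ m
      have := drift_kpow (P ϑ) (hdrift ϑ) hγ hK hV0 hVmeas μ m
      rwa [hM] at this
    have hVnfin : ∀ (ϑ : Θ) (m : ℕ),
        ∫⁻ x, ENNReal.ofReal (V x) ∂(μ.bind (kpow (P ϑ) m)) ≠ ⊤ := fun ϑ m =>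
      ((hVn ϑ m).trans_lt (ENNReal.add_lt_top.mpr
        ⟨ENNReal.mul_lt_top ENNReal.ofReal_lt_top ENNReal.ofReal_lt_top,
          ENNReal.ofReal_lt_top⟩)).ne
    have hIntn : ∀ (ϑ : Θ) (m : ℕ), Integrable V (μ.bind (kpow (P ϑ) m)) := fun ϑ m =>
      (lintegral_ofReal_ne_top_iff_integrable hVmeas.aestronglyMeasurable
        (Filter.Eventually.of_forall hV0)).mp (hVnfin ϑ m)
    have hFFn : ∀ (ϑ : Θ) (m : ℕ), ∫⁻ x, FF β V x ∂(μ.bind (kpow (P ϑ) m)) ≠ ⊤ := by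
      intro ϑ m
      rw [lintegral_FF hVmeas hβ.le hV0, measure_univ]
      exact ENNReal.add_ne_top.mpr
        ⟨ENNReal.one_ne_top, ENNReal.mul_ne_top ENNReal.ofReal_ne_top (hVnfin ϑ m)⟩
    have hXnn : ∀ m : ℕ, (0:ℝ) ≤ 1 + β * (γ ^ m * r + K / (1 - γ)) := by
      intro m
      have h1 : 0 ≤ γ ^ m * r := mul_nonneg (pow_nonneg hγ.1.le m) hr
      have h2 : 0 ≤ K / (1 - γ) := div_nonneg hK h1γ.le
      nlinarith [hβ.le]
    have hFFle : ∀ (ϑ : Θ) (m : ℕ), ∫⁻ x, FF β V x ∂(μ.bind (kpow (P ϑ) m))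
        ≤ ENNReal.ofReal (1 + β * (γ ^ m * r + K / (1 - γ))) := by
      intro ϑ m
      rw [lintegral_FF hVmeas hβ.le hV0, measure_univ]
      have hofReal : ENNReal.ofReal (1 + β * (γ ^ m * r + K / (1 - γ)))
          = 1 + ENNReal.ofReal β * (ENNReal.ofReal (γ ^ m) * ENNReal.ofReal r
              + ENNReal.ofReal (K / (1 - γ))) := by
        rw [ENNReal.ofReal_add zero_le_one (mul_nonneg hβ.le
            (add_nonneg (mul_nonneg (pow_nonneg hγ.1.le m) hr) (div_nonneg hK h1γ.le))),
          ENNReal.ofReal_one, ENNReal.ofReal_mul hβ.le,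
          ENNReal.ofReal_add (mul_nonneg (pow_nonneg hγ.1.le m) hr) (div_nonneg hK h1γ.le),
          ENNReal.ofReal_mul (pow_nonneg hγ.1.le m)]
      rw [hofReal]
      gcongr
      exact hVn ϑ m
    have key : ∀ m : ℕ,
        ∫⁻ x, FF β V x ∂(tv (μ.bind (kpow (P θ) m)) (μ.bind (kpow (P θ') m)))
        ≤ ENNReal.ofReal c * ENNReal.ofReal
            (∑ i ∈ Finset.range m, α ^ (m - 1 - i) * (1 + β * (γ ^ i * r + K / (1 - γ)))) := by
      intro m
      induction m with
      | zero =>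
        simp only [bind_kpow_zero]
        rw [tv_self, lintegral_zero_measure]
        exact zero_le
      | succ m ih =>
        have hgnn : (0:ℝ) ≤ ∑ i ∈ Finset.range m,
            α ^ (m - 1 - i) * (1 + β * (γ ^ i * r + K / (1 - γ))) :=
          Finset.sum_nonneg fun i _ => mul_nonneg (pow_nonneg hα0.le _) (hXnn i)
        have tri : ∫⁻ x, FF β V x
              ∂(tv ((μ.bind (kpow (P θ) m)).bind (P θ)) ((μ.bind (kpow (P θ') m)).bind (P θ')))
            ≤ ∫⁻ x, FF β V x
                ∂(tv ((μ.bind (kpow (P θ) m)).bind (P θ)) ((μ.bind (kpow (P θ') m)).bind (P θ)))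
              + ∫⁻ x, FF β V x
                ∂(tv ((μ.bind (kpow (P θ') m)).bind (P θ)) ((μ.bind (kpow (P θ') m)).bind (P θ'))) := by
          calc _ ≤ ∫⁻ x, FF β V x
              ∂(tv ((μ.bind (kpow (P θ) m)).bind (P θ)) ((μ.bind (kpow (P θ') m)).bind (P θ))
                + tv ((μ.bind (kpow (P θ') m)).bind (P θ)) ((μ.bind (kpow (P θ') m)).bind (P θ'))) :=
                lintegral_mono' (tv_triangle _ _ _) le_rfl
          _ = _ := lintegral_add_measure _ _ _
        have hb1 : ∫⁻ x, FF β V x ∂((μ.bind (kpow (P θ) m)).bind (P θ)) ≠ ⊤ :=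
          bind_FF_fin (P θ) (hdrift θ) hβ.le hγ.1.le hK hV0 hVmeas _ (hVnfin θ m)
        have hb2 : ∫⁻ x, FF β V x ∂((μ.bind (kpow (P θ') m)).bind (P θ)) ≠ ⊤ :=
          bind_FF_fin (P θ) (hdrift θ) hβ.le hγ.1.le hK hV0 hVmeas _ (hVnfin θ' m)
        have hcontr : ∫⁻ x, FF β V x
              ∂(tv ((μ.bind (kpow (P θ) m)).bind (P θ)) ((μ.bind (kpow (P θ') m)).bind (P θ)))
            ≤ ENNReal.ofReal α * ∫⁻ x, FF β V x
                ∂(tv (μ.bind (kpow (P θ) m)) (μ.bind (kpow (P θ') m))) := by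
          rw [← sigmaB_eq hβ.le hV0 hVmeas _ _ (tv_FF_fin _ _ hb1 hb2)]
          have h := hsig θ (μ.bind (kpow (P θ) m)) (μ.bind (kpow (P θ') m))
            (hIntn θ m) (hIntn θ' m)
          calc ENNReal.ofReal (sigmaB β V ((μ.bind (kpow (P θ) m)).bind (P θ))
                ((μ.bind (kpow (P θ') m)).bind (P θ)))
              ≤ ENNReal.ofReal (α * sigmaB β V (μ.bind (kpow (P θ) m)) (μ.bind (kpow (P θ') m))) :=
                ENNReal.ofReal_le_ofReal h
          _ = ENNReal.ofReal α
                * ENNReal.ofReal (sigmaB β V (μ.bind (kpow (P θ) m)) (μ.bind (kpow (P θ') m))) :=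
                ENNReal.ofReal_mul hα0.le
          _ = _ := by
                rw [sigmaB_eq hβ.le hV0 hVmeas _ _ (tv_FF_fin _ _ (hFFn θ m) (hFFn θ' m))]
        have hlipterm : ∫⁻ x, FF β V x
              ∂(tv ((μ.bind (kpow (P θ') m)).bind (P θ)) ((μ.bind (kpow (P θ') m)).bind (P θ')))
            ≤ ENNReal.ofReal c * ENNReal.ofReal (1 + β * (γ ^ m * r + K / (1 - γ))) := by
          have hbl := bindLip hβ hV0 hVmeas hγ hK (P θ) (P θ') (hdrift θ) (hdrift θ') c hc
            (fun x => hlip θ θ' x) (μ.bind (kpow (P θ') m)) (hVnfin θ' m)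
          exact hbl.trans (mul_le_mul_right (hFFle θ' m) _)
        calc ∫⁻ x, FF β V x
              ∂(tv (μ.bind (kpow (P θ) (m + 1))) (μ.bind (kpow (P θ') (m + 1))))
            = ∫⁻ x, FF β V x
              ∂(tv ((μ.bind (kpow (P θ) m)).bind (P θ)) ((μ.bind (kpow (P θ') m)).bind (P θ'))) := by
              simp only [bind_kpow_succ]
        _ ≤ ∫⁻ x, FF β V x
              ∂(tv ((μ.bind (kpow (P θ) m)).bind (P θ)) ((μ.bind (kpow (P θ') m)).bind (P θ)))
            + ∫⁻ x, FF β V x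
              ∂(tv ((μ.bind (kpow (P θ') m)).bind (P θ)) ((μ.bind (kpow (P θ') m)).bind (P θ'))) := tri
        _ ≤ ENNReal.ofReal α * (ENNReal.ofReal c * ENNReal.ofReal
              (∑ i ∈ Finset.range m, α ^ (m - 1 - i) * (1 + β * (γ ^ i * r + K / (1 - γ)))))
            + ENNReal.ofReal c * ENNReal.ofReal (1 + β * (γ ^ m * r + K / (1 - γ))) :=
            add_le_add (hcontr.trans (mul_le_mul_right ih _)) hlipterm
        _ = ENNReal.ofReal c * ENNReal.ofReal
              (∑ i ∈ Finset.range (m + 1), α ^ (m + 1 - 1 - i)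
                * (1 + β * (γ ^ i * r + K / (1 - γ)))) := by
            simp only [Nat.add_sub_cancel]
            rw [sum_shift α (fun i => 1 + β * (γ ^ i * r + K / (1 - γ))) m,
              ENNReal.ofReal_add (mul_nonneg hα0.le hgnn) (hXnn m),
              ENNReal.ofReal_mul hα0.le]
            ring
    have hfin : ∫⁻ x, FF β V x
        ∂(tv (μ.bind (kpow (P θ) n)) (μ.bind (kpow (P θ') n))) ≠ ⊤ :=
      tv_FF_fin _ _ (hFFn θ n) (hFFn θ' n)
    have hRHS0 : 0 ≤ (1 / (1 - α)) * (1 + β * (K / (1 - γ))) + (α ^ n / (α - γ)) * β * r := by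
      have h1 : 0 ≤ K / (1 - γ) := div_nonneg hK h1γ.le
      have h2 : 0 ≤ 1 / (1 - α) := by positivity
      have h3 : 0 ≤ α ^ n / (α - γ) := div_nonneg (pow_nonneg hα0.le n) hαγ.le
      have h4 : 0 ≤ 1 + β * (K / (1 - γ)) := by nlinarith [hβ.le]
      nlinarith [mul_nonneg h2 h4, mul_nonneg (mul_nonneg h3 hβ.le) hr]
    have h1 : ENNReal.ofReal (sigmaB β V (μ.bind (kpow (P θ) n)) (μ.bind (kpow (P θ') n)))
        ≤ ENNReal.ofReal (c * ((1 / (1 - α)) * (1 + β * (K / (1 - γ)))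
            + (α ^ n / (α - γ)) * β * r)) := by
      rw [sigmaB_eq hβ.le hV0 hVmeas _ _ hfin]
      refine (key n).trans ?_
      rw [← ENNReal.ofReal_mul hc]
      exact ENNReal.ofReal_le_ofReal
        (mul_le_mul_of_nonneg_left (gsum_le hγ hα hK hβ.le hr n) hc)
    exact (ENNReal.ofReal_le_ofReal_iff (mul_nonneg hc hRHS0)).mp h1


end PoissonPaper
end
end

section
/- For every finite signed measure η on X with ∫ V d|η| < ∞ and η(X) = 0, every n ≥ 1, and all θ, θ' ∈ Θ, one has σ_β(P_θ^n η, P_{θ'}^n η) ≤ L_P |θ − θ'| · n · α^{n−1} · ∫ (1 + βV) d|η|. -/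
open MeasureTheory ProbabilityTheory ENNReal

noncomputable section

namespace PoissonPaper

variable {X : Type*} [MeasurableSpace X]

section TVLemmas

variable {X : Type*} [MeasurableSpace X]

private lemma le_add_of_toReal_le {a b c : ℝ≥0∞} (ha : a ≠ ∞) (hb : b ≠ ∞) (hc : c ≠ ∞)
    (h : a.toReal ≤ b.toReal + c.toReal) : a ≤ b + c := by
  rw [← ENNReal.toReal_le_toReal ha (ENNReal.add_ne_top.2 ⟨hb, hc⟩), ENNReal.toReal_add hb hc]
  exact h

instance tvFinite (μ ν : Measure X) [IsFiniteMeasure μ] [IsFiniteMeasure ν] :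
    IsFiniteMeasure (tv μ ν) := by
  unfold tv SignedMeasure.totalVariation
  infer_instance

theorem tv_comm_s11 (μ ν : Measure X) [IsFiniteMeasure μ] [IsFiniteMeasure ν] : tv μ ν = tv ν μ := by
  rw [tv, tv, ← SignedMeasure.totalVariation_neg, neg_sub]

theorem le_add_tv_s11 (μ ν : Measure X) [IsFiniteMeasure μ] [IsFiniteMeasure ν] :
    μ ≤ ν + tv μ ν := by
  set s := μ.toSignedMeasure - ν.toSignedMeasure with hs
  obtain ⟨i, hi₁, hi₂, hi₃, hpos, hneg⟩ := s.toJordanDecomposition_spec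
  rw [Measure.le_iff]
  intro A hA
  have hAi : MeasurableSet (A ∩ i) := hA.inter hi₁
  have hAd : MeasurableSet (A \ i) := hA.diff hi₁
  have h1 : μ (A ∩ i) ≤ ν (A ∩ i) + tv μ ν (A ∩ i) := by
    have hsub : 0 ≤ s (A ∩ i) :=
      s.nonneg_of_zero_le_restrict (s.zero_le_restrict_subset hi₁ Set.inter_subset_right hi₂)
    have hsv : s (A ∩ i) = (μ (A ∩ i)).toReal - (ν (A ∩ i)).toReal :=
      Measure.toSignedMeasure_sub_apply hAi
    have hppart : s.toJordanDecomposition.posPart (A ∩ i) = ENNReal.ofReal (s (A ∩ i)) := by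
      rw [hpos, SignedMeasure.toMeasureOfZeroLE_apply _ hi₂ hi₁ hAi,
        ← ENNReal.ofReal_eq_coe_nnreal,
        Set.inter_eq_self_of_subset_right Set.inter_subset_right]
    have htv : ENNReal.ofReal (s (A ∩ i)) ≤ tv μ ν (A ∩ i) := by
      rw [← hppart, tv, SignedMeasure.totalVariation, Measure.add_apply, ← hs]
      exact self_le_add_right _ _
    refine le_add_of_toReal_le (measure_ne_top _ _) (measure_ne_top _ _) (measure_ne_top _ _) ?_
    have : s (A ∩ i) ≤ (tv μ ν (A ∩ i)).toReal := by
      calc s (A ∩ i) = (ENNReal.ofReal (s (A ∩ i))).toReal := by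
            rw [ENNReal.toReal_ofReal hsub]
        _ ≤ (tv μ ν (A ∩ i)).toReal := ENNReal.toReal_mono (measure_ne_top _ _) htv
    linarith [hsv ▸ this]
  have h2 : μ (A \ i) ≤ ν (A \ i) + tv μ ν (A \ i) := by
    have hsub : s (A \ i) ≤ 0 :=
      s.nonpos_of_restrict_le_zero (s.restrict_le_zero_subset hi₁.compl
        (Set.diff_subset_iff.mpr (by simp [Set.union_comm])) hi₃)
    have hsv : s (A \ i) = (μ (A \ i)).toReal - (ν (A \ i)).toReal :=
      Measure.toSignedMeasure_sub_apply hAd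
    refine le_add_of_toReal_le (measure_ne_top _ _) (measure_ne_top _ _) (measure_ne_top _ _) ?_
    have h0 : (0:ℝ) ≤ (tv μ ν (A \ i)).toReal := ENNReal.toReal_nonneg
    linarith [hsv ▸ hsub]
  calc μ A = μ (A ∩ i) + μ (A \ i) := (measure_inter_add_diff A hi₁).symm
    _ ≤ (ν (A ∩ i) + tv μ ν (A ∩ i)) + (ν (A \ i) + tv μ ν (A \ i)) := add_le_add h1 h2
    _ = (ν (A ∩ i) + ν (A \ i)) + (tv μ ν (A ∩ i) + tv μ ν (A \ i)) := by ring
    _ = ν A + tv μ ν A := by rw [measure_inter_add_diff A hi₁, measure_inter_add_diff A hi₁]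
    _ = (ν + tv μ ν) A := (Measure.add_apply _ _ _).symm

end TVLemmas
section TVLemmas2

variable {X : Type*} [MeasurableSpace X]

private lemma ofReal_sub_apply_le {μ' ν' ρ : Measure X} [IsFiniteMeasure μ'] [IsFiniteMeasure ν']
    (h : μ' ≤ ν' + ρ) {B : Set X} (hB : MeasurableSet B) (hρB : ρ B ≠ ∞) :
    ENNReal.ofReal ((μ'.toSignedMeasure - ν'.toSignedMeasure) B) ≤ ρ B := by
  have hsv : (μ'.toSignedMeasure - ν'.toSignedMeasure) B = (μ' B).toReal - (ν' B).toReal :=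
    Measure.toSignedMeasure_sub_apply hB
  have hle : (μ' B).toReal ≤ (ν' B).toReal + (ρ B).toReal := by
    have := Measure.le_iff'.mp h B
    rw [Measure.add_apply] at this
    calc (μ' B).toReal ≤ ((ν' B) + (ρ B)).toReal :=
          ENNReal.toReal_mono (ENNReal.add_ne_top.2 ⟨measure_ne_top _ _, hρB⟩) this
      _ = (ν' B).toReal + (ρ B).toReal := ENNReal.toReal_add (measure_ne_top _ _) hρB
  calc ENNReal.ofReal ((μ'.toSignedMeasure - ν'.toSignedMeasure) B)
      ≤ ENNReal.ofReal ((ρ B).toReal) := by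
        refine ENNReal.ofReal_le_ofReal ?_
        rw [hsv]; linarith
    _ = ρ B := ENNReal.ofReal_toReal hρB

theorem tv_le_of (μ ν ρ : Measure X) [IsFiniteMeasure μ] [IsFiniteMeasure ν] [IsFiniteMeasure ρ]
    (h1 : μ ≤ ν + ρ) (h2 : ν ≤ μ + ρ) : tv μ ν ≤ ρ := by
  set s := μ.toSignedMeasure - ν.toSignedMeasure with hs
  obtain ⟨i, hi₁, hi₂, hi₃, hpos, hneg⟩ := s.toJordanDecomposition_spec
  rw [Measure.le_iff]
  intro A hA
  have hiA : MeasurableSet (i ∩ A) := hi₁.inter hA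
  have hicA : MeasurableSet (iᶜ ∩ A) := hi₁.compl.inter hA
  have hp : s.toJordanDecomposition.posPart A ≤ ρ (i ∩ A) := by
    rw [hpos, SignedMeasure.toMeasureOfZeroLE_apply _ hi₂ hi₁ hA, ← ENNReal.ofReal_eq_coe_nnreal]
    exact ofReal_sub_apply_le h1 hiA (measure_ne_top _ _)
  have hn : s.toJordanDecomposition.negPart A ≤ ρ (iᶜ ∩ A) := by
    rw [hneg, SignedMeasure.toMeasureOfLEZero_apply _ hi₃ hi₁.compl hA,
      ← ENNReal.ofReal_eq_coe_nnreal]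
    have : -(s (iᶜ ∩ A)) = (ν.toSignedMeasure - μ.toSignedMeasure) (iᶜ ∩ A) := by
      rw [hs, ← VectorMeasure.neg_apply, neg_sub]
    rw [this]
    exact ofReal_sub_apply_le h2 hicA (measure_ne_top _ _)
  have : tv μ ν A = s.toJordanDecomposition.posPart A + s.toJordanDecomposition.negPart A := by
    rw [tv, ← hs, SignedMeasure.totalVariation, Measure.add_apply]
  rw [this]
  calc s.toJordanDecomposition.posPart A + s.toJordanDecomposition.negPart A
      ≤ ρ (i ∩ A) + ρ (iᶜ ∩ A) := add_le_add hp hn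
    _ = ρ (A ∩ i) + ρ (A \ i) := by rw [Set.inter_comm, Set.diff_eq, Set.inter_comm A iᶜ]
    _ = ρ A := measure_inter_add_diff A hi₁

theorem tv_eq_of {a b c d : Measure X} [IsFiniteMeasure a] [IsFiniteMeasure b] [IsFiniteMeasure c]
    [IsFiniteMeasure d] (h : a + d = b + c) : tv a b = tv c d := by
  have he : a.toSignedMeasure - b.toSignedMeasure = c.toSignedMeasure - d.toSignedMeasure := by
    rw [sub_eq_sub_iff_add_eq_add, ← Measure.toSignedMeasure_add, ← Measure.toSignedMeasure_add]
    exact Measure.toSignedMeasure_congr (by rw [h, add_comm b c])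
  rw [tv, tv, he]

theorem tv_add_le (a b c d : Measure X) [IsFiniteMeasure a] [IsFiniteMeasure b] [IsFiniteMeasure c]
    [IsFiniteMeasure d] : tv (a + c) (b + d) ≤ tv a b + tv c d := by
  refine tv_le_of _ _ _ ?_ ?_
  · calc a + c ≤ (b + tv a b) + (d + tv c d) := add_le_add (le_add_tv_s11 a b) (le_add_tv_s11 c d)
      _ = (b + d) + (tv a b + tv c d) := add_add_add_comm _ _ _ _
  · calc b + d ≤ (a + tv b a) + (c + tv d c) := add_le_add (le_add_tv_s11 b a) (le_add_tv_s11 d c)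
      _ = (a + c) + (tv a b + tv c d) := by
          rw [tv_comm_s11 b a, tv_comm_s11 d c]; exact add_add_add_comm _ _ _ _

theorem tv_smul_le (r : NNReal) (μ ν : Measure X) [IsFiniteMeasure μ] [IsFiniteMeasure ν] :
    tv (r • μ) (r • ν) ≤ r • tv μ ν := by
  refine tv_le_of _ _ _ ?_ ?_
  · rw [← smul_add]
    intro A
    simp only [Measure.smul_apply, smul_eq_mul]
    exact mul_le_mul_right (Measure.le_iff'.mp (le_add_tv_s11 μ ν) A) _
  · rw [← smul_add]
    intro A
    simp only [Measure.smul_apply, smul_eq_mul]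
    have : ν ≤ μ + tv μ ν := by rw [tv_comm_s11 μ ν] at *; exact le_add_tv_s11 ν μ
    exact mul_le_mul_right (Measure.le_iff'.mp this A) _

end TVLemmas2
section SigmaFrame

variable {X : Type*} [MeasurableSpace X]

private lemma lintegral_le_add_of_le {μ : Measure X} {h a b : X → ℝ≥0∞} (ha : Measurable a)
    (hle : ∀ x, h x ≤ a x + b x) : ∫⁻ x, h x ∂μ ≤ ∫⁻ x, a x ∂μ + ∫⁻ x, b x ∂μ := by
  calc ∫⁻ x, h x ∂μ ≤ ∫⁻ x, a x + (h x - a x) ∂μ := lintegral_mono fun x => le_add_tsub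
    _ = ∫⁻ x, a x ∂μ + ∫⁻ x, (h x - a x) ∂μ := lintegral_add_left ha _
    _ ≤ _ := add_le_add_right (lintegral_mono fun x => tsub_le_iff_left.mpr (hle x)) _

private lemma finset_sum_lintegral_le {ι : Type*} (s : Finset ι) (g : ι → X → ℝ≥0∞)
    (μ : Measure X) : ∑ i ∈ s, ∫⁻ x, g i x ∂μ ≤ ∫⁻ x, ∑ i ∈ s, g i x ∂μ := by
  classical
  induction s using Finset.induction with
  | empty => simp
  | insert a s h ih =>
    rw [Finset.sum_insert h]
    refine le_trans (add_le_add_right ih _) ?_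
    refine le_trans (le_lintegral_add _ _) (le_of_eq (lintegral_congr fun x => ?_))
    rw [Finset.sum_insert h]

/-- `W β V μ = ∫⁻ (1 + βV) dμ`. -/
def W (β : ℝ) (V : X → ℝ) (μ : Measure X) : ℝ≥0∞ :=
  ∫⁻ x, ENNReal.ofReal (1 + β * V x) ∂μ

/-- `TT β V μ ν = ∫⁻ (1 + βV) d|μ - ν|`. -/
def TT (β : ℝ) (V : X → ℝ) (μ ν : Measure X) [IsFiniteMeasure μ] [IsFiniteMeasure ν] : ℝ≥0∞ :=
  W β V (tv μ ν)

variable {β : ℝ} {V : X → ℝ}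

lemma wf_meas (hV : Measurable V) : Measurable fun x => ENNReal.ofReal (1 + β * V x) :=
  (measurable_const.add (hV.const_mul β)).ennreal_ofReal

lemma W_add (μ ν : Measure X) : W β V (μ + ν) = W β V μ + W β V ν :=
  lintegral_add_measure _ μ ν

lemma W_mono {μ ν : Measure X} (h : μ ≤ ν) : W β V μ ≤ W β V ν :=
  lintegral_mono' h le_rfl

lemma sigmaB_eq_toReal (hV : Measurable V) (h1 : ∀ x, 0 ≤ 1 + β * V x)
    (μ ν : Measure X) [IsFiniteMeasure μ] [IsFiniteMeasure ν] :
    sigmaB β V μ ν = (TT β V μ ν).toReal := by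
  rw [sigmaB, TT, W,
    integral_eq_lintegral_of_nonneg_ae (Filter.Eventually.of_forall h1)
      (measurable_const.add (hV.const_mul β)).aestronglyMeasurable]

lemma tv_le_add_s11 (μ ν : Measure X) [IsFiniteMeasure μ] [IsFiniteMeasure ν] : tv μ ν ≤ μ + ν := by
  refine tv_le_of _ _ _ (Measure.le_iff'.mpr fun A => ?_) (Measure.le_iff'.mpr fun A => ?_)
  · simp only [Measure.add_apply]
    exact le_trans (self_le_add_right _ _) (self_le_add_left _ _)
  · simp only [Measure.add_apply]
    exact le_trans (self_le_add_left _ _) (self_le_add_left _ _)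

lemma TT_le_W_add (μ ν : Measure X) [IsFiniteMeasure μ] [IsFiniteMeasure ν] :
    TT β V μ ν ≤ W β V μ + W β V ν := by
  rw [TT, ← W_add]
  exact W_mono (tv_le_add_s11 μ ν)

lemma TT_comm (μ ν : Measure X) [IsFiniteMeasure μ] [IsFiniteMeasure ν] :
    TT β V μ ν = TT β V ν μ := by rw [TT, TT, tv_comm_s11]

lemma bind_univ (μ : Measure X) (P : Kernel X X) [IsMarkovKernel P] :
    (μ.bind P) Set.univ = μ Set.univ := by
  rw [Measure.bind_apply MeasurableSet.univ (Kernel.measurable P).aemeasurable]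
  simp

lemma W_bind_le (hV : Measurable V) (hV0 : ∀ x, 0 ≤ V x) (hβ : 0 < β) {γ K : ℝ}
    (hγ : γ < 1) (hγ0 : 0 ≤ γ) (hK : 0 ≤ K) (P : Kernel X X) [IsMarkovKernel P]
    (hdrift : Drift P V γ K) (μ : Measure X) :
    W β V (μ.bind P) ≤ ENNReal.ofReal (1 + β * K) * W β V μ := by
  rw [W, Measure.lintegral_bind (Kernel.measurable P).aemeasurable (wf_meas hV).aemeasurable]
  have key : ∀ x, ∫⁻ y, ENNReal.ofReal (1 + β * V y) ∂(P x) ≤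
      ENNReal.ofReal (1 + β * K) * ENNReal.ofReal (1 + β * V x) := by
    intro x
    have h1 : ∀ y, ENNReal.ofReal (1 + β * V y) =
        1 + ENNReal.ofReal β * ENNReal.ofReal (V y) := by
      intro y
      rw [ENNReal.ofReal_add zero_le_one (mul_nonneg hβ.le (hV0 y)), ENNReal.ofReal_one,
        ENNReal.ofReal_mul hβ.le]
    have hnn : (0:ℝ) ≤ β * (γ * V x + K) :=
      mul_nonneg hβ.le (add_nonneg (mul_nonneg hγ0 (hV0 x)) hK)
    calc ∫⁻ y, ENNReal.ofReal (1 + β * V y) ∂(P x)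
        = ∫⁻ y, 1 + ENNReal.ofReal β * ENNReal.ofReal (V y) ∂(P x) :=
          lintegral_congr fun y => h1 y
      _ = 1 + ENNReal.ofReal β * ∫⁻ y, ENNReal.ofReal (V y) ∂(P x) := by
          rw [lintegral_add_left measurable_const, lintegral_const_mul _ hV.ennreal_ofReal]
          simp
      _ ≤ 1 + ENNReal.ofReal β * ENNReal.ofReal (γ * V x + K) :=
          add_le_add_right (mul_le_mul_right (hdrift x) _) _
      _ ≤ ENNReal.ofReal (1 + β * K) * ENNReal.ofReal (1 + β * V x) := by
          rw [← ENNReal.ofReal_mul hβ.le, ← ENNReal.ofReal_one,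
            ← ENNReal.ofReal_add zero_le_one hnn, ← ENNReal.ofReal_mul (by positivity)]
          refine ENNReal.ofReal_le_ofReal ?_
          nlinarith [mul_nonneg hβ.le (hV0 x),
            mul_nonneg (mul_nonneg hβ.le hβ.le) (mul_nonneg hK (hV0 x)),
            mul_nonneg (mul_nonneg hβ.le (hV0 x)) (sub_nonneg.mpr hγ.le)]
  calc ∫⁻ x, (∫⁻ y, ENNReal.ofReal (1 + β * V y) ∂(P x)) ∂μ
      ≤ ∫⁻ x, ENNReal.ofReal (1 + β * K) * ENNReal.ofReal (1 + β * V x) ∂μ :=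
        lintegral_mono key
    _ = ENNReal.ofReal (1 + β * K) * W β V μ := lintegral_const_mul _ (wf_meas hV)

end SigmaFrame
section LipInt

variable {X : Type*} [MeasurableSpace X] {β : ℝ} {V : X → ℝ}

private lemma ofReal_toReal_sub_le {a b c : ℝ≥0∞} (hb : b ≠ ∞) (h : a ≤ b + c) :
    ENNReal.ofReal (a.toReal - b.toReal) ≤ c := by
  rcases eq_or_ne c ∞ with rfl | hc
  · exact le_top
  have ha : a ≠ ∞ := ne_top_of_le_ne_top (ENNReal.add_ne_top.2 ⟨hb, hc⟩) h
  have h' : a.toReal ≤ b.toReal + c.toReal := by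
    rw [← ENNReal.toReal_add hb hc]
    exact ENNReal.toReal_mono (ENNReal.add_ne_top.2 ⟨hb, hc⟩) h
  calc ENNReal.ofReal (a.toReal - b.toReal) ≤ ENNReal.ofReal c.toReal :=
        ENNReal.ofReal_le_ofReal (by linarith)
    _ = c := ENNReal.ofReal_toReal hc

/-- Set-level bound: `|νP - νQ|(A) ≤ ∫ |P_x - Q_x|(A) dν`. -/
private lemma tv_bind_apply_le (P Q : Kernel X X) [IsMarkovKernel P] [IsMarkovKernel Q]
    (ν : Measure X) [IsFiniteMeasure ν] {A : Set X} (hA : MeasurableSet A) :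
    tv (ν.bind P) (ν.bind Q) A ≤ ∫⁻ x, tv (P x) (Q x) A ∂ν := by
  have star : ∀ (P Q : Kernel X X) [IsMarkovKernel P] [IsMarkovKernel Q] {B : Set X},
      MeasurableSet B → (ν.bind P) B ≤ (ν.bind Q) B + ∫⁻ x, tv (P x) (Q x) B ∂ν := by
    intro P Q _ _ B hB
    rw [Measure.bind_apply hB (Kernel.measurable P).aemeasurable, Measure.bind_apply hB (Kernel.measurable Q).aemeasurable]
    refine lintegral_le_add_of_le (Q.measurable_coe hB) fun x => ?_
    have := Measure.le_iff'.mp (le_add_tv_s11 (P x) (Q x)) B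
    rwa [Measure.add_apply] at this
  set s := (ν.bind P).toSignedMeasure - (ν.bind Q).toSignedMeasure with hs
  obtain ⟨i, hi₁, hi₂, hi₃, hpos, hneg⟩ := s.toJordanDecomposition_spec
  have hiA : MeasurableSet (i ∩ A) := hi₁.inter hA
  have hicA : MeasurableSet (iᶜ ∩ A) := hi₁.compl.inter hA
  have hp : s.toJordanDecomposition.posPart A ≤ ∫⁻ x, tv (P x) (Q x) (i ∩ A) ∂ν := by
    rw [hpos, SignedMeasure.toMeasureOfZeroLE_apply _ hi₂ hi₁ hA, ← ENNReal.ofReal_eq_coe_nnreal]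
    have hsv : s (i ∩ A) = ((ν.bind P) (i ∩ A)).toReal - ((ν.bind Q) (i ∩ A)).toReal :=
      Measure.toSignedMeasure_sub_apply hiA
    rw [hsv]
    exact ofReal_toReal_sub_le (measure_ne_top _ _) (star P Q hiA)
  have hn : s.toJordanDecomposition.negPart A ≤ ∫⁻ x, tv (P x) (Q x) (iᶜ ∩ A) ∂ν := by
    rw [hneg, SignedMeasure.toMeasureOfLEZero_apply _ hi₃ hi₁.compl hA,
      ← ENNReal.ofReal_eq_coe_nnreal]
    have hsv : -s (iᶜ ∩ A) =
        ((ν.bind Q) (iᶜ ∩ A)).toReal - ((ν.bind P) (iᶜ ∩ A)).toReal := by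
      rw [hs, ← VectorMeasure.neg_apply, neg_sub, Measure.toSignedMeasure_sub_apply hicA]
      rfl
    rw [hsv]
    refine le_trans (ofReal_toReal_sub_le (measure_ne_top _ _) (star Q P hicA)) ?_
    exact lintegral_mono fun x => le_of_eq (by rw [tv_comm_s11])
  have htv : tv (ν.bind P) (ν.bind Q) A =
      s.toJordanDecomposition.posPart A + s.toJordanDecomposition.negPart A := by
    rw [tv, ← hs, SignedMeasure.totalVariation, Measure.add_apply]
  rw [htv]
  calc s.toJordanDecomposition.posPart A + s.toJordanDecomposition.negPart A
      ≤ (∫⁻ x, tv (P x) (Q x) (i ∩ A) ∂ν) + ∫⁻ x, tv (P x) (Q x) (iᶜ ∩ A) ∂ν := add_le_add hp hn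
    _ ≤ ∫⁻ x, tv (P x) (Q x) (i ∩ A) + tv (P x) (Q x) (iᶜ ∩ A) ∂ν := le_lintegral_add _ _
    _ = ∫⁻ x, tv (P x) (Q x) A ∂ν := by
        refine lintegral_congr fun x => ?_
        rw [Set.inter_comm i A, Set.inter_comm iᶜ A, ← Set.diff_eq]
        exact measure_inter_add_diff A hi₁

theorem TT_bind_le_lintegral (hV : Measurable V) (P Q : Kernel X X) [IsMarkovKernel P]
    [IsMarkovKernel Q] (ν : Measure X) [IsFiniteMeasure ν] :
    TT β V (ν.bind P) (ν.bind Q) ≤ ∫⁻ x, TT β V (P x) (Q x) ∂ν := by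
  set f : X → ℝ≥0∞ := fun x => ENNReal.ofReal (1 + β * V x) with hf
  have hfm : Measurable f := wf_meas hV
  have step : ∀ φ : MeasureTheory.SimpleFunc X ℝ≥0∞, (⇑φ ≤ f) →
      φ.lintegral (tv (ν.bind P) (ν.bind Q)) ≤ ∫⁻ x, TT β V (P x) (Q x) ∂ν := by
    intro φ hφ
    rw [SimpleFunc.lintegral]
    calc ∑ c ∈ φ.range, c * tv (ν.bind P) (ν.bind Q) (φ ⁻¹' {c})
        ≤ ∑ c ∈ φ.range, c * ∫⁻ x, tv (P x) (Q x) (φ ⁻¹' {c}) ∂ν :=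
          Finset.sum_le_sum fun c _ => mul_le_mul_right
            (tv_bind_apply_le P Q ν (φ.measurableSet_fiber c)) c
      _ ≤ ∑ c ∈ φ.range, ∫⁻ x, c * tv (P x) (Q x) (φ ⁻¹' {c}) ∂ν :=
          Finset.sum_le_sum fun c _ => lintegral_const_mul_le c _
      _ ≤ ∫⁻ x, ∑ c ∈ φ.range, c * tv (P x) (Q x) (φ ⁻¹' {c}) ∂ν :=
          finset_sum_lintegral_le _ _ _
      _ ≤ ∫⁻ x, TT β V (P x) (Q x) ∂ν := by
          refine lintegral_mono fun x => ?_
          have : ∑ c ∈ φ.range, c * tv (P x) (Q x) (φ ⁻¹' {c}) = φ.lintegral (tv (P x) (Q x)) :=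
            rfl
          rw [this]
          calc φ.lintegral (tv (P x) (Q x)) = ∫⁻ y, φ y ∂(tv (P x) (Q x)) :=
                (SimpleFunc.lintegral_eq_lintegral φ _).symm
            _ ≤ ∫⁻ y, f y ∂(tv (P x) (Q x)) := lintegral_mono hφ
            _ = TT β V (P x) (Q x) := rfl
  rw [TT, W, lintegral_eq_iSup_eapprox_lintegral hfm]
  refine iSup_le fun n => step _ fun a => ?_
  exact (le_iSup (fun n => (SimpleFunc.eapprox f n) a) n).trans_eq
    (SimpleFunc.iSup_eapprox_apply hfm a)

end LipInt
section Contract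

variable {X : Type*} [MeasurableSpace X] {β : ℝ} {V : X → ℝ} {γ K : ℝ}

lemma W_kernel_le (hV : Measurable V) (hV0 : ∀ x, 0 ≤ V x) (hβ : 0 < β)
    (hγ : γ < 1) (hγ0 : 0 ≤ γ) (hK : 0 ≤ K) (P : Kernel X X) [IsMarkovKernel P]
    (hdrift : Drift P V γ K) (x : X) :
    W β V (P x) ≤ ENNReal.ofReal (1 + β * K) * ENNReal.ofReal (1 + β * V x) := by
  have h1 : P x = (Measure.dirac x).bind P := (Measure.dirac_bind (Kernel.measurable P) x).symm
  rw [h1]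
  refine (W_bind_le hV hV0 hβ hγ hγ0 hK P hdrift _).trans ?_
  rw [W, lintegral_dirac' _ (wf_meas hV)]

lemma TT_ne_top {μ ν : Measure X} [IsFiniteMeasure μ] [IsFiniteMeasure ν]
    (hμ : W β V μ ≠ ∞) (hν : W β V ν ≠ ∞) : TT β V μ ν ≠ ∞ :=
  ne_top_of_le_ne_top (ENNReal.add_ne_top.2 ⟨hμ, hν⟩) (TT_le_W_add μ ν)

lemma TT_eq_ofReal_sigmaB (hV : Measurable V) (h1 : ∀ x, 0 ≤ 1 + β * V x)
    (μ ν : Measure X) [IsFiniteMeasure μ] [IsFiniteMeasure ν] (h : TT β V μ ν ≠ ∞) :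
    TT β V μ ν = ENNReal.ofReal (sigmaB β V μ ν) := by
  rw [sigmaB_eq_toReal hV h1, ENNReal.ofReal_toReal h]

lemma integrable_of_W (hV : Measurable V) (hV0 : ∀ x, 0 ≤ V x) (hβ : 0 < β)
    (μ : Measure X) (h : W β V μ ≠ ∞) : Integrable V μ := by
  refine ⟨hV.aestronglyMeasurable, ?_⟩
  have hb : ∀ x, (‖V x‖₊ : ℝ≥0∞) ≤ ENNReal.ofReal β⁻¹ * ENNReal.ofReal (1 + β * V x) := by
    intro x
    rw [← enorm_eq_nnnorm, Real.enorm_eq_ofReal (hV0 x), ← ENNReal.ofReal_mul (by positivity)]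
    refine ENNReal.ofReal_le_ofReal ?_
    rw [mul_add, mul_one, ← mul_assoc, inv_mul_cancel₀ hβ.ne', one_mul]
    linarith [inv_nonneg.mpr hβ.le]
  rw [HasFiniteIntegral]
  calc ∫⁻ x, (‖V x‖₊ : ℝ≥0∞) ∂μ ≤ ∫⁻ x, ENNReal.ofReal β⁻¹ * ENNReal.ofReal (1 + β * V x) ∂μ :=
        lintegral_mono hb
    _ = ENNReal.ofReal β⁻¹ * W β V μ := lintegral_const_mul _ (wf_meas hV)
    _ < ∞ := ENNReal.mul_lt_top ENNReal.ofReal_lt_top (lt_top_iff_ne_top.2 h)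

lemma TT_congr {β : ℝ} {V : X → ℝ} {μ μ' ν ν' : Measure X} [IsFiniteMeasure μ]
    [IsFiniteMeasure μ'] [IsFiniteMeasure ν] [IsFiniteMeasure ν']
    (h1 : μ = μ') (h2 : ν = ν') : TT β V μ ν = TT β V μ' ν' := by
  subst h1; subst h2; rfl

private lemma nnreal_smul_measure_eq (c : NNReal) (μ : Measure X) :
    c • μ = ((c : ℝ≥0∞) • μ) := by
  ext s hs
  rw [Measure.smul_apply, Measure.smul_apply, ENNReal.smul_def, smul_eq_mul]

lemma W_smul (c : NNReal) (μ : Measure X) : W β V (c • μ) = c * W β V μ := by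
  rw [nnreal_smul_measure_eq, W, W, lintegral_smul_measure, smul_eq_mul]

lemma TT_smul_le (c : NNReal) (μ ν : Measure X) [IsFiniteMeasure μ] [IsFiniteMeasure ν] :
    TT β V (c • μ) (c • ν) ≤ c * TT β V μ ν := by
  rw [TT, TT, ← W_smul]
  exact W_mono (tv_smul_le c μ ν)

lemma TT_contract (hV : Measurable V) (hV0 : ∀ x, 0 ≤ V x) (hβ : 0 < β)
    (hγ : γ < 1) (hγ0 : 0 ≤ γ) (hK : 0 ≤ K)
    {α' : ℝ} (hα0 : 0 ≤ α') (Pθ : Kernel X X) [IsMarkovKernel Pθ] (hd : Drift Pθ V γ K)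
    (hsigθ : ∀ (μ₁ μ₂ : Measure X) [IsProbabilityMeasure μ₁] [IsProbabilityMeasure μ₂],
      Integrable V μ₁ → Integrable V μ₂ →
      sigmaB β V (μ₁.bind Pθ) (μ₂.bind Pθ) ≤ α' * sigmaB β V μ₁ μ₂)
    (μ₁ μ₂ : Measure X) [IsFiniteMeasure μ₁] [IsFiniteMeasure μ₂]
    (hmass : μ₁ Set.univ = μ₂ Set.univ) (hW1 : W β V μ₁ ≠ ∞) (hW2 : W β V μ₂ ≠ ∞) :
    TT β V (μ₁.bind Pθ) (μ₂.bind Pθ) ≤ ENNReal.ofReal α' * TT β V μ₁ μ₂ := by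
  have h1' : ∀ x, 0 ≤ 1 + β * V x := fun x => by nlinarith [mul_nonneg hβ.le (hV0 x)]
  rcases eq_or_ne (μ₁ Set.univ) 0 with h0 | h0
  · have e1 : μ₁ = 0 := Measure.measure_univ_eq_zero.mp h0
    have e2 : μ₂ = 0 := Measure.measure_univ_eq_zero.mp (hmass ▸ h0)
    subst e1
    subst e2
    have hb0 : (0 : Measure X).bind ⇑Pθ = 0 := Measure.bind_zero_left _
    have hz : TT β V ((0 : Measure X).bind Pθ) ((0 : Measure X).bind Pθ) = 0 := by
      rw [TT_congr hb0 hb0, TT, tv, sub_self, SignedMeasure.totalVariation_zero, W,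
        lintegral_zero_measure]
    rw [hz]
    exact zero_le
  set c : NNReal := (μ₁ Set.univ).toNNReal with hc
  have hc0 : c ≠ 0 := by
    simp only [hc, ne_eq, ENNReal.toNNReal_eq_zero_iff]
    push_neg
    exact ⟨h0, measure_ne_top _ _⟩
  have hcoe : (c : ℝ≥0∞) = μ₁ Set.univ := ENNReal.coe_toNNReal (measure_ne_top _ _)
  set ν₁ : Measure X := (c⁻¹ : NNReal) • μ₁ with hν₁
  set ν₂ : Measure X := (c⁻¹ : NNReal) • μ₂ with hν₂
  have hrec : ∀ (μ : Measure X), μ Set.univ = μ₁ Set.univ → c • ((c⁻¹ : NNReal) • μ) = μ := by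
    intro μ _
    rw [smul_smul, mul_inv_cancel₀ hc0, one_smul]
  have hprob : ∀ (μ : Measure X) [IsFiniteMeasure μ], μ Set.univ = μ₁ Set.univ →
      IsProbabilityMeasure ((c⁻¹ : NNReal) • μ) := by
    intro μ _ hμ
    constructor
    rw [nnreal_smul_measure_eq, Measure.smul_apply, smul_eq_mul, hμ, ← hcoe,
      ENNReal.coe_inv hc0, ENNReal.inv_mul_cancel (ENNReal.coe_ne_zero.2 hc0) ENNReal.coe_ne_top]
  haveI i1 : IsProbabilityMeasure ν₁ := hprob μ₁ rfl
  haveI i2 : IsProbabilityMeasure ν₂ := hprob μ₂ hmass.symm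
  have hWν₁ : W β V ν₁ ≠ ∞ := by
    rw [hν₁, W_smul]
    exact ENNReal.mul_ne_top ENNReal.coe_ne_top hW1
  have hWν₂ : W β V ν₂ ≠ ∞ := by
    rw [hν₂, W_smul]
    exact ENNReal.mul_ne_top ENNReal.coe_ne_top hW2
  have hint₁ : Integrable V ν₁ := integrable_of_W hV hV0 hβ _ hWν₁
  have hint₂ : Integrable V ν₂ := integrable_of_W hV hV0 hβ _ hWν₂
  have hWb₁ : W β V (ν₁.bind Pθ) ≠ ∞ :=
    ne_top_of_le_ne_top (ENNReal.mul_ne_top ENNReal.ofReal_ne_top hWν₁)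
      (W_bind_le hV hV0 hβ hγ hγ0 hK Pθ hd ν₁)
  have hWb₂ : W β V (ν₂.bind Pθ) ≠ ∞ :=
    ne_top_of_le_ne_top (ENNReal.mul_ne_top ENNReal.ofReal_ne_top hWν₂)
      (W_bind_le hV hV0 hβ hγ hγ0 hK Pθ hd ν₂)
  have core : TT β V (ν₁.bind Pθ) (ν₂.bind Pθ) ≤ ENNReal.ofReal α' * TT β V ν₁ ν₂ := by
    rw [TT_eq_ofReal_sigmaB hV h1' _ _ (TT_ne_top hWb₁ hWb₂),
      TT_eq_ofReal_sigmaB hV h1' _ _ (TT_ne_top hWν₁ hWν₂), ← ENNReal.ofReal_mul hα0]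
    exact ENNReal.ofReal_le_ofReal (hsigθ ν₁ ν₂ hint₁ hint₂)
  have hbs : ∀ (μ : Measure X) [IsFiniteMeasure μ], μ Set.univ = μ₁ Set.univ →
      μ.bind Pθ = c • (((c⁻¹ : NNReal) • μ).bind Pθ) := by
    intro μ _ hμ
    conv_lhs => rw [← hrec μ hμ]
    rw [nnreal_smul_measure_eq c, Measure.bind_smul, ← nnreal_smul_measure_eq]
  calc TT β V (μ₁.bind Pθ) (μ₂.bind Pθ)
      = TT β V (c • (ν₁.bind Pθ)) (c • (ν₂.bind Pθ)) :=
        TT_congr (hbs μ₁ rfl) (hbs μ₂ hmass.symm)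
    _ ≤ c * TT β V (ν₁.bind Pθ) (ν₂.bind Pθ) := TT_smul_le c _ _
    _ ≤ c * (ENNReal.ofReal α' * TT β V ν₁ ν₂) := mul_le_mul_right core _
    _ ≤ c * (ENNReal.ofReal α' * ((c⁻¹ : NNReal) * TT β V μ₁ μ₂)) := by
        refine mul_le_mul_right (mul_le_mul_right ?_ _) _
        exact TT_smul_le (c⁻¹ : NNReal) μ₁ μ₂
    _ = ENNReal.ofReal α' * (((c : ℝ≥0∞) * ((c⁻¹ : NNReal) : ℝ≥0∞)) * TT β V μ₁ μ₂) := by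
        ring
    _ = ENNReal.ofReal α' * TT β V μ₁ μ₂ := by
        rw [ENNReal.coe_inv hc0, ENNReal.mul_inv_cancel (ENNReal.coe_ne_zero.2 hc0)
          ENNReal.coe_ne_top, one_mul]

end Contract
section Main

variable {X : Type*} [MeasurableSpace X] {β : ℝ} {V : X → ℝ} {γ K : ℝ}

lemma tv_congr {μ μ' ν ν' : Measure X} [IsFiniteMeasure μ]
    [IsFiniteMeasure μ'] [IsFiniteMeasure ν] [IsFiniteMeasure ν']
    (h1 : μ = μ') (h2 : ν = ν') : tv μ ν = tv μ' ν' := by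
  subst h1; subst h2; rfl

lemma kpow_zero_bind (P : Kernel X X) [IsMarkovKernel P] (μ : Measure X) :
    μ.bind ⇑(kpow P 0) = μ := by
  have h1 : ⇑(kpow P 0) = Measure.dirac := by
    funext a
    show (kpow P 0) a = Measure.dirac a
    rw [kpow, Kernel.id_apply]
  rw [h1, Measure.bind_dirac]

lemma kpow_succ_bind (P : Kernel X X) [IsMarkovKernel P] (n : ℕ) (μ : Measure X) :
    μ.bind ⇑(kpow P (n + 1)) = (μ.bind ⇑(kpow P n)).bind ⇑P := by
  have h1 : kpow P (n + 1) = P ∘ₖ kpow P n := rfl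
  calc μ.bind ⇑(kpow P (n + 1)) = μ.bind (fun a => ((kpow P n) a).bind ⇑P) := by
        rw [h1]
        exact congrArg μ.bind (funext fun a => Kernel.comp_apply P (kpow P n) a)
    _ = (μ.bind ⇑(kpow P n)).bind ⇑P :=
        (Measure.bind_bind (Kernel.measurable _).aemeasurable (Kernel.measurable _).aemeasurable).symm

lemma W_kpow_ne_top (hV : Measurable V) (hV0 : ∀ x, 0 ≤ V x) (hβ : 0 < β)
    (hγ : γ < 1) (hγ0 : 0 ≤ γ) (hK : 0 ≤ K) (P : Kernel X X) [IsMarkovKernel P]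
    (hd : Drift P V γ K) (μ : Measure X) (hW : W β V μ ≠ ∞) (n : ℕ) :
    W β V (μ.bind ⇑(kpow P n)) ≠ ∞ := by
  induction n with
  | zero => rw [kpow_zero_bind]; exact hW
  | succ n ih =>
    rw [kpow_succ_bind]
    exact ne_top_of_le_ne_top (ENNReal.mul_ne_top ENNReal.ofReal_ne_top ih)
      (W_bind_le hV hV0 hβ hγ hγ0 hK P hd _)

/-- Jordan decomposition of `p - q` as a pair of measures. -/
lemma jordan_pair (p q : Measure X) [IsFiniteMeasure p] [IsFiniteMeasure q] :
    ∃ (zp zn : Measure X) (_ : IsFiniteMeasure zp) (_ : IsFiniteMeasure zn),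
      p + zn = q + zp ∧ tv p q = zp + zn := by
  refine ⟨(p.toSignedMeasure - q.toSignedMeasure).toJordanDecomposition.posPart,
    (p.toSignedMeasure - q.toSignedMeasure).toJordanDecomposition.negPart,
    inferInstance, inferInstance, ?_, rfl⟩
  rw [← Measure.toSignedMeasure_eq_toSignedMeasure_iff, Measure.toSignedMeasure_add,
    Measure.toSignedMeasure_add]
  have hS := (p.toSignedMeasure - q.toSignedMeasure).toSignedMeasure_toJordanDecomposition
  rw [JordanDecomposition.toSignedMeasure] at hS
  rw [sub_eq_sub_iff_add_eq_add] at hS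
  exact (hS.symm).trans (add_comm _ _)

/-- The Lipschitz step for a "signed measure" given as a pair `(p, q)`. -/
lemma TT_lip_step (hV : Measurable V) (hV0 : ∀ x, 0 ≤ V x) (hβ : 0 < β)
    (Pa Pb : Kernel X X) [IsMarkovKernel Pa] [IsMarkovKernel Pb] {c : ℝ}
    (hlipTT : ∀ x, TT β V (Pa x) (Pb x) ≤ ENNReal.ofReal c * ENNReal.ofReal (1 + β * V x))
    (p q : Measure X) [IsFiniteMeasure p] [IsFiniteMeasure q] :
    TT β V (p.bind ⇑Pa + q.bind ⇑Pb) (q.bind ⇑Pa + p.bind ⇑Pb) ≤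
      ENNReal.ofReal c * TT β V p q := by
  obtain ⟨zp, zn, hf1, hf2, hjordan, htvpq⟩ := jordan_pair p q
  have htveq : tv (p.bind ⇑Pa + q.bind ⇑Pb) (q.bind ⇑Pa + p.bind ⇑Pb) =
      tv (zp.bind ⇑Pa + zn.bind ⇑Pb) (zn.bind ⇑Pa + zp.bind ⇑Pb) := by
    refine tv_eq_of ?_
    calc p.bind ⇑Pa + q.bind ⇑Pb + (zn.bind ⇑Pa + zp.bind ⇑Pb)
        = (p + zn).bind ⇑Pa + (q + zp).bind ⇑Pb := by
          rw [Measure.comp_add, Measure.comp_add]; abel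
      _ = (q + zp).bind ⇑Pa + (p + zn).bind ⇑Pb := by
          rw [show (p + zn).bind ⇑Pa = (q + zp).bind ⇑Pa from
              congrArg (fun m : Measure X => m.bind ⇑Pa) hjordan,
            show (q + zp).bind ⇑Pb = (p + zn).bind ⇑Pb from
              (congrArg (fun m : Measure X => m.bind ⇑Pb) hjordan).symm]
      _ = q.bind ⇑Pa + p.bind ⇑Pb + (zp.bind ⇑Pa + zn.bind ⇑Pb) := by
          rw [Measure.comp_add, Measure.comp_add]; abel
  have hadd : tv (zp.bind ⇑Pa + zn.bind ⇑Pb) (zn.bind ⇑Pa + zp.bind ⇑Pb) ≤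
      tv (zp.bind ⇑Pa) (zp.bind ⇑Pb) + tv (zn.bind ⇑Pb) (zn.bind ⇑Pa) := by
    have h := tv_add_le (zp.bind ⇑Pa) (zp.bind ⇑Pb) (zn.bind ⇑Pb) (zn.bind ⇑Pa)
    have e : tv (zp.bind ⇑Pa + zn.bind ⇑Pb) (zn.bind ⇑Pa + zp.bind ⇑Pb) =
        tv (zp.bind ⇑Pa + zn.bind ⇑Pb) (zp.bind ⇑Pb + zn.bind ⇑Pa) :=
      tv_congr rfl (add_comm _ _)
    rw [e]
    exact h
  have hW1 : TT β V (zp.bind ⇑Pa) (zp.bind ⇑Pb) ≤ ENNReal.ofReal c * W β V zp := by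
    refine (TT_bind_le_lintegral hV Pa Pb zp).trans ?_
    calc ∫⁻ x, TT β V (Pa x) (Pb x) ∂zp
        ≤ ∫⁻ x, ENNReal.ofReal c * ENNReal.ofReal (1 + β * V x) ∂zp := lintegral_mono hlipTT
      _ = ENNReal.ofReal c * W β V zp := lintegral_const_mul _ (wf_meas hV)
  have hW2 : TT β V (zn.bind ⇑Pb) (zn.bind ⇑Pa) ≤ ENNReal.ofReal c * W β V zn := by
    refine (TT_bind_le_lintegral hV Pb Pa zn).trans ?_
    calc ∫⁻ x, TT β V (Pb x) (Pa x) ∂zn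
        ≤ ∫⁻ x, ENNReal.ofReal c * ENNReal.ofReal (1 + β * V x) ∂zn :=
          lintegral_mono fun x => (TT_comm _ _).le.trans (hlipTT x)
      _ = ENNReal.ofReal c * W β V zn := lintegral_const_mul _ (wf_meas hV)
  have hTTpq : TT β V p q = W β V zp + W β V zn := by
    rw [TT, htvpq, W_add]
  calc TT β V (p.bind ⇑Pa + q.bind ⇑Pb) (q.bind ⇑Pa + p.bind ⇑Pb)
      = W β V (tv (zp.bind ⇑Pa + zn.bind ⇑Pb) (zn.bind ⇑Pa + zp.bind ⇑Pb)) := by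
        rw [TT, htveq]
    _ ≤ W β V (tv (zp.bind ⇑Pa) (zp.bind ⇑Pb) + tv (zn.bind ⇑Pb) (zn.bind ⇑Pa)) :=
        W_mono hadd
    _ = TT β V (zp.bind ⇑Pa) (zp.bind ⇑Pb) + TT β V (zn.bind ⇑Pb) (zn.bind ⇑Pa) := W_add _ _
    _ ≤ ENNReal.ofReal c * W β V zp + ENNReal.ofReal c * W β V zn := add_le_add hW1 hW2
    _ = ENNReal.ofReal c * (W β V zp + W β V zn) := (mul_add _ _ _).symm
    _ = ENNReal.ofReal c * TT β V p q := by rw [hTTpq]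

end Main
section Final

variable {X : Type*} [MeasurableSpace X] {β : ℝ} {V : X → ℝ} {γ K : ℝ}

lemma TT_add_le (a b c d : Measure X) [IsFiniteMeasure a] [IsFiniteMeasure b] [IsFiniteMeasure c]
    [IsFiniteMeasure d] : TT β V (a + c) (b + d) ≤ TT β V a b + TT β V c d := by
  rw [TT, TT, TT, ← W_add]
  exact W_mono (tv_add_le a b c d)

lemma TT_kpow_contract (hV : Measurable V) (hV0 : ∀ x, 0 ≤ V x) (hβ : 0 < β)
    (hγ : γ < 1) (hγ0 : 0 ≤ γ) (hK : 0 ≤ K)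
    {α' : ℝ} (hα0 : 0 ≤ α') (Pa : Kernel X X) [IsMarkovKernel Pa] (hd : Drift Pa V γ K)
    (hsigθ : ∀ (μ₁ μ₂ : Measure X) [IsProbabilityMeasure μ₁] [IsProbabilityMeasure μ₂],
      Integrable V μ₁ → Integrable V μ₂ →
      sigmaB β V (μ₁.bind Pa) (μ₂.bind Pa) ≤ α' * sigmaB β V μ₁ μ₂)
    (p q : Measure X) [IsFiniteMeasure p] [IsFiniteMeasure q]
    (hm : p Set.univ = q Set.univ) (hWp : W β V p ≠ ∞) (hWq : W β V q ≠ ∞) (n : ℕ) :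
    TT β V (p.bind ⇑(kpow Pa n)) (q.bind ⇑(kpow Pa n)) ≤
      (ENNReal.ofReal α') ^ n * TT β V p q := by
  induction n with
  | zero =>
    rw [TT_congr (kpow_zero_bind Pa p) (kpow_zero_bind Pa q), pow_zero, one_mul]
  | succ n ih =>
    rw [TT_congr (kpow_succ_bind Pa n p) (kpow_succ_bind Pa n q)]
    have hstep := TT_contract hV hV0 hβ hγ hγ0 hK hα0 Pa hd hsigθ
      (p.bind ⇑(kpow Pa n)) (q.bind ⇑(kpow Pa n))
      (by rw [bind_univ, bind_univ, hm])
      (W_kpow_ne_top hV hV0 hβ hγ hγ0 hK Pa hd p hWp n)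
      (W_kpow_ne_top hV hV0 hβ hγ hγ0 hK Pa hd q hWq n)
    calc TT β V ((p.bind ⇑(kpow Pa n)).bind ⇑Pa) ((q.bind ⇑(kpow Pa n)).bind ⇑Pa)
        ≤ ENNReal.ofReal α' * TT β V (p.bind ⇑(kpow Pa n)) (q.bind ⇑(kpow Pa n)) := hstep
      _ ≤ ENNReal.ofReal α' * ((ENNReal.ofReal α') ^ n * TT β V p q) := mul_le_mul_right ih _
      _ = (ENNReal.ofReal α') ^ (n + 1) * TT β V p q := by rw [pow_succ]; ring

end Final


/-- Improved Lipschitz bound for iterated kernels applied to signed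
measures of total mass zero. -/
theorem iterated_kernel_lipschitz_zero_mass
    {X : Type*} [MeasurableSpace X] {k : ℕ} {Θ : Set (EuclideanSpace ℝ (Fin k))}
    (hΘ : Θ.Nonempty) (P : Θ → Kernel X X) [∀ θ, IsMarkovKernel (P θ)]
    (V : X → ℝ) (hVmeas : Measurable V) (hV0 : ∀ x, 0 ≤ V x)
    (β : ℝ) (hβ : 0 < β)
    (γ K : ℝ) (hγ : γ ∈ Set.Ioo (0:ℝ) 1) (hK : 0 ≤ K) (hdrift : ∀ θ, Drift (P θ) V γ K)
    (L_P : ℝ)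
    (hlip : ∀ θ θ' : Θ, ∀ x,
      sigmaB β V ((P θ) x) ((P θ') x) ≤ L_P * ‖θ.1 - θ'.1‖ * (1 + β * V x))
    (α : ℝ) (hα : α ∈ Set.Ioo γ 1)
    (hsig : ∀ θ, ∀ (μ₁ μ₂ : Measure X) [IsProbabilityMeasure μ₁] [IsProbabilityMeasure μ₂],
      Integrable V μ₁ → Integrable V μ₂ →
      sigmaB β V (μ₁.bind (P θ)) (μ₂.bind (P θ)) ≤ α * sigmaB β V μ₁ μ₂) :
    ∀ η : SignedMeasure X, Integrable V η.totalVariation → η Set.univ = 0 →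
      ∀ n : ℕ, 1 ≤ n → ∀ θ θ' : Θ,
      sigmaS β V (sbind (kpow (P θ) n) η - sbind (kpow (P θ') n) η) ≤
        L_P * ‖θ.1 - θ'.1‖ * (n : ℝ) * α ^ (n - 1) *
          ∫ x, (1 + β * V x) ∂η.totalVariation := by
  intro η hint hzero n hn θ θ'
  have hγ0 : 0 ≤ γ := hγ.1.le
  have hγ1 : γ < 1 := hγ.2
  have hα0 : 0 ≤ α := (hγ.1.trans hα.1).le
  have h1' : ∀ x : X, 0 ≤ 1 + β * V x := fun x => by nlinarith [mul_nonneg hβ.le (hV0 x)]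
  cases isEmpty_or_nonempty X with
  | inl hempty =>
    rw [sigmaS, integral_of_isEmpty, integral_of_isEmpty, mul_zero]
  | inr hne =>
  by_cases hθ : θ = θ'
  · subst hθ
    rw [sub_self]
    have h0 : sigmaS β V (0 : SignedMeasure X) = 0 := by
      rw [sigmaS, SignedMeasure.totalVariation_zero, integral_zero_measure]
    rw [h0, sub_self, norm_zero, mul_zero, zero_mul, zero_mul, zero_mul]
  obtain ⟨x₀⟩ := hne
  set c : ℝ := L_P * ‖θ.1 - θ'.1‖ with hc
  have hc0 : 0 ≤ c := by
    have hpos : 0 < 1 + β * V x₀ := by nlinarith [mul_nonneg hβ.le (hV0 x₀)]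
    have hnn : (0:ℝ) ≤ sigmaB β V ((P θ) x₀) ((P θ') x₀) := by
      unfold sigmaB
      exact integral_nonneg fun x => h1' x
    have hle := hlip θ θ' x₀
    by_contra h
    push_neg at h
    nlinarith [mul_neg_of_neg_of_pos h hpos]
  have hlipTT : ∀ x, TT β V ((P θ) x) ((P θ') x) ≤
      ENNReal.ofReal c * ENNReal.ofReal (1 + β * V x) := by
    intro x
    have hfin : TT β V ((P θ) x) ((P θ') x) ≠ ∞ :=
      TT_ne_top
        (ne_top_of_le_ne_top (ENNReal.mul_ne_top ENNReal.ofReal_ne_top ENNReal.ofReal_ne_top)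
          (W_kernel_le hVmeas hV0 hβ hγ1 hγ0 hK _ (hdrift θ) x))
        (ne_top_of_le_ne_top (ENNReal.mul_ne_top ENNReal.ofReal_ne_top ENNReal.ofReal_ne_top)
          (W_kernel_le hVmeas hV0 hβ hγ1 hγ0 hK _ (hdrift θ') x))
    rw [TT_eq_ofReal_sigmaB hVmeas h1' _ _ hfin, ← ENNReal.ofReal_mul hc0]
    exact ENNReal.ofReal_le_ofReal (hlip θ θ' x)
  -- the main induction
  have main : ∀ m : ℕ, 1 ≤ m → ∀ (p q : Measure X),
      ∀ (_ : IsFiniteMeasure p) (_ : IsFiniteMeasure q),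
      p Set.univ = q Set.univ → W β V p ≠ ∞ → W β V q ≠ ∞ →
      TT β V (p.bind ⇑(kpow (P θ) m) + q.bind ⇑(kpow (P θ') m))
        (q.bind ⇑(kpow (P θ) m) + p.bind ⇑(kpow (P θ') m)) ≤
      (m : ℝ≥0∞) * ENNReal.ofReal c * ENNReal.ofReal α ^ (m - 1) * TT β V p q := by
    intro m hm1
    induction m, hm1 using Nat.le_induction with
    | base =>
      intro p q hfp hfq hm hWp hWq
      have e : ∀ (Q : Kernel X X) (_ : IsMarkovKernel Q) (μ : Measure X),
          μ.bind ⇑(kpow Q 1) = μ.bind ⇑Q := by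
        intro Q _ μ
        rw [kpow_succ_bind, kpow_zero_bind]
      calc TT β V (p.bind ⇑(kpow (P θ) 1) + q.bind ⇑(kpow (P θ') 1))
            (q.bind ⇑(kpow (P θ) 1) + p.bind ⇑(kpow (P θ') 1))
          = TT β V (p.bind ⇑(P θ) + q.bind ⇑(P θ')) (q.bind ⇑(P θ) + p.bind ⇑(P θ')) :=
            TT_congr (by rw [e (P θ) inferInstance, e (P θ') inferInstance])
              (by rw [e (P θ) inferInstance, e (P θ') inferInstance])
        _ ≤ ENNReal.ofReal c * TT β V p q :=
            TT_lip_step hVmeas hV0 hβ (P θ) (P θ') hlipTT p q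
        _ = ((1:ℕ) : ℝ≥0∞) * ENNReal.ofReal c * ENNReal.ofReal α ^ (1 - 1) * TT β V p q := by
            norm_num
    | succ m hm1 ih =>
      intro p q hfp hfq hm hWp hWq
      have hWpa : W β V (p.bind ⇑(kpow (P θ) m)) ≠ ∞ :=
        W_kpow_ne_top hVmeas hV0 hβ hγ1 hγ0 hK _ (hdrift θ) p hWp m
      have hWqa : W β V (q.bind ⇑(kpow (P θ) m)) ≠ ∞ :=
        W_kpow_ne_top hVmeas hV0 hβ hγ1 hγ0 hK _ (hdrift θ) q hWq m
      have hWpb : W β V (p.bind ⇑(kpow (P θ') m)) ≠ ∞ :=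
        W_kpow_ne_top hVmeas hV0 hβ hγ1 hγ0 hK _ (hdrift θ') p hWp m
      have hWqb : W β V (q.bind ⇑(kpow (P θ') m)) ≠ ∞ :=
        W_kpow_ne_top hVmeas hV0 hβ hγ1 hγ0 hK _ (hdrift θ') q hWq m
      have step1 : TT β V (p.bind ⇑(kpow (P θ) (m+1)) + q.bind ⇑(kpow (P θ') (m+1)))
          (q.bind ⇑(kpow (P θ) (m+1)) + p.bind ⇑(kpow (P θ') (m+1))) =
          TT β V ((p.bind ⇑(kpow (P θ) m)).bind ⇑(P θ) + (q.bind ⇑(kpow (P θ') m)).bind ⇑(P θ'))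
            ((q.bind ⇑(kpow (P θ) m)).bind ⇑(P θ) + (p.bind ⇑(kpow (P θ') m)).bind ⇑(P θ')) :=
        TT_congr (by rw [kpow_succ_bind (P θ) m p, kpow_succ_bind (P θ') m q])
          (by rw [kpow_succ_bind (P θ) m q, kpow_succ_bind (P θ') m p])
      have step2 : TT β V
          ((p.bind ⇑(kpow (P θ) m)).bind ⇑(P θ) + (q.bind ⇑(kpow (P θ') m)).bind ⇑(P θ'))
          ((q.bind ⇑(kpow (P θ) m)).bind ⇑(P θ) + (p.bind ⇑(kpow (P θ') m)).bind ⇑(P θ')) =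
          TT β V
          (((p.bind ⇑(kpow (P θ) m)).bind ⇑(P θ) + (q.bind ⇑(kpow (P θ) m)).bind ⇑(P θ')) +
            ((p.bind ⇑(kpow (P θ) m)).bind ⇑(P θ') + (q.bind ⇑(kpow (P θ') m)).bind ⇑(P θ')))
          (((q.bind ⇑(kpow (P θ) m)).bind ⇑(P θ) + (p.bind ⇑(kpow (P θ) m)).bind ⇑(P θ')) +
            ((q.bind ⇑(kpow (P θ) m)).bind ⇑(P θ') + (p.bind ⇑(kpow (P θ') m)).bind ⇑(P θ'))) := by
        rw [TT, TT]
        exact congrArg (W β V) (tv_eq_of (by abel))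
      have t1 : TT β V
          ((p.bind ⇑(kpow (P θ) m)).bind ⇑(P θ) + (q.bind ⇑(kpow (P θ) m)).bind ⇑(P θ'))
          ((q.bind ⇑(kpow (P θ) m)).bind ⇑(P θ) + (p.bind ⇑(kpow (P θ) m)).bind ⇑(P θ')) ≤
          ENNReal.ofReal c * (ENNReal.ofReal α ^ m * TT β V p q) := by
        refine (TT_lip_step hVmeas hV0 hβ (P θ) (P θ') hlipTT _ _).trans ?_
        refine mul_le_mul_right ?_ _
        exact TT_kpow_contract hVmeas hV0 hβ hγ1 hγ0 hK hα0 (P θ) (hdrift θ) (hsig θ)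
          p q hm hWp hWq m
      have t2 : TT β V
          ((p.bind ⇑(kpow (P θ) m)).bind ⇑(P θ') + (q.bind ⇑(kpow (P θ') m)).bind ⇑(P θ'))
          ((q.bind ⇑(kpow (P θ) m)).bind ⇑(P θ') + (p.bind ⇑(kpow (P θ') m)).bind ⇑(P θ')) ≤
          ENNReal.ofReal α *
            ((m : ℝ≥0∞) * ENNReal.ofReal c * ENNReal.ofReal α ^ (m - 1) * TT β V p q) := by
        have e2 : TT β V
            ((p.bind ⇑(kpow (P θ) m)).bind ⇑(P θ') + (q.bind ⇑(kpow (P θ') m)).bind ⇑(P θ'))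
            ((q.bind ⇑(kpow (P θ) m)).bind ⇑(P θ') + (p.bind ⇑(kpow (P θ') m)).bind ⇑(P θ')) =
            TT β V ((p.bind ⇑(kpow (P θ) m) + q.bind ⇑(kpow (P θ') m)).bind ⇑(P θ'))
              ((q.bind ⇑(kpow (P θ) m) + p.bind ⇑(kpow (P θ') m)).bind ⇑(P θ')) :=
          TT_congr (by rw [Measure.comp_add]) (by rw [Measure.comp_add])
        rw [e2]
        have hmass2 : (p.bind ⇑(kpow (P θ) m) + q.bind ⇑(kpow (P θ') m)) Set.univ =
            (q.bind ⇑(kpow (P θ) m) + p.bind ⇑(kpow (P θ') m)) Set.univ := by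
          rw [Measure.add_apply, Measure.add_apply, bind_univ, bind_univ, bind_univ, bind_univ,
            hm]
        have hWs1 : W β V (p.bind ⇑(kpow (P θ) m) + q.bind ⇑(kpow (P θ') m)) ≠ ∞ := by
          rw [W_add]
          exact ENNReal.add_ne_top.2 ⟨hWpa, hWqb⟩
        have hWs2 : W β V (q.bind ⇑(kpow (P θ) m) + p.bind ⇑(kpow (P θ') m)) ≠ ∞ := by
          rw [W_add]
          exact ENNReal.add_ne_top.2 ⟨hWqa, hWpb⟩
        refine (TT_contract hVmeas hV0 hβ hγ1 hγ0 hK hα0 (P θ') (hdrift θ') (hsig θ')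
          _ _ hmass2 hWs1 hWs2).trans ?_
        exact mul_le_mul_right (ih p q hfp hfq hm hWp hWq) _
      calc TT β V (p.bind ⇑(kpow (P θ) (m+1)) + q.bind ⇑(kpow (P θ') (m+1)))
            (q.bind ⇑(kpow (P θ) (m+1)) + p.bind ⇑(kpow (P θ') (m+1)))
          ≤ ENNReal.ofReal c * (ENNReal.ofReal α ^ m * TT β V p q) +
            ENNReal.ofReal α *
              ((m : ℝ≥0∞) * ENNReal.ofReal c * ENNReal.ofReal α ^ (m - 1) * TT β V p q) := by
            rw [step1, step2]
            exact (TT_add_le _ _ _ _).trans (add_le_add t1 t2)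
        _ = ((m + 1 : ℕ) : ℝ≥0∞) * ENNReal.ofReal c * ENNReal.ofReal α ^ ((m + 1) - 1) *
            TT β V p q := by
            have hA : ENNReal.ofReal α * ENNReal.ofReal α ^ (m - 1) = ENNReal.ofReal α ^ m := by
              rw [← pow_succ']
              congr 1
              omega
            have hswap : ENNReal.ofReal α *
                ((m : ℝ≥0∞) * ENNReal.ofReal c * ENNReal.ofReal α ^ (m - 1) * TT β V p q) =
                (m : ℝ≥0∞) * ENNReal.ofReal c * ENNReal.ofReal α ^ m * TT β V p q := by
              rw [← hA]; ring
            rw [hswap, Nat.add_sub_cancel, Nat.cast_add, Nat.cast_one]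
            ring
  -- assemble the final statement
  haveI htvfin : IsFiniteMeasure η.totalVariation := by
    unfold SignedMeasure.totalVariation
    infer_instance
  have hη : η.toJordanDecomposition.posPart.toSignedMeasure -
      η.toJordanDecomposition.negPart.toSignedMeasure = η := by
    have h := η.toSignedMeasure_toJordanDecomposition
    rwa [JordanDecomposition.toSignedMeasure] at h
  have hm : η.toJordanDecomposition.posPart Set.univ =
      η.toJordanDecomposition.negPart Set.univ := by
    have h2 : η Set.univ = (η.toJordanDecomposition.posPart Set.univ).toReal -
        (η.toJordanDecomposition.negPart Set.univ).toReal := by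
      conv_lhs => rw [← hη]
      exact Measure.toSignedMeasure_sub_apply MeasurableSet.univ
    rw [hzero] at h2
    exact (ENNReal.toReal_eq_toReal_iff' (measure_ne_top _ _) (measure_ne_top _ _)).mp (by linarith)
  have hWtv : W β V η.totalVariation ≠ ∞ := by
    have hVlint : ∫⁻ x, ENNReal.ofReal (V x) ∂η.totalVariation ≠ ∞ := by
      have h := hint.2
      rw [HasFiniteIntegral] at h
      rw [lintegral_congr fun x => (Real.enorm_eq_ofReal (hV0 x)).symm]
      exact h.ne
    have hWeq : W β V η.totalVariation = η.totalVariation Set.univ +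
        ENNReal.ofReal β * ∫⁻ x, ENNReal.ofReal (V x) ∂η.totalVariation := by
      rw [W]
      rw [lintegral_congr fun x => by
        rw [ENNReal.ofReal_add zero_le_one (mul_nonneg hβ.le (hV0 x)), ENNReal.ofReal_one,
          ENNReal.ofReal_mul hβ.le]]
      rw [lintegral_add_left measurable_const, lintegral_const_mul _ hVmeas.ennreal_ofReal]
      simp
    rw [hWeq]
    exact ENNReal.add_ne_top.2 ⟨measure_ne_top _ _,
      ENNReal.mul_ne_top ENNReal.ofReal_ne_top hVlint⟩
  have hWsum : W β V η.toJordanDecomposition.posPart + W β V η.toJordanDecomposition.negPart =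
      W β V η.totalVariation := by
    rw [← W_add]
    rfl
  obtain ⟨hWp, hWq⟩ := ENNReal.add_ne_top.1 (hWsum ▸ hWtv)
  have hTTpq : TT β V η.toJordanDecomposition.posPart η.toJordanDecomposition.negPart =
      W β V η.totalVariation := by
    rw [TT]
    exact congrArg (W β V) (congrArg SignedMeasure.totalVariation hη)
  have hξ : sbind (kpow (P θ) n) η - sbind (kpow (P θ') n) η =
      (η.toJordanDecomposition.posPart.bind ⇑(kpow (P θ) n) +
        η.toJordanDecomposition.negPart.bind ⇑(kpow (P θ') n)).toSignedMeasure -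
      (η.toJordanDecomposition.negPart.bind ⇑(kpow (P θ) n) +
        η.toJordanDecomposition.posPart.bind ⇑(kpow (P θ') n)).toSignedMeasure := by
    rw [sbind, sbind, Measure.toSignedMeasure_add, Measure.toSignedMeasure_add]
    abel
  have hI : ∫ x, (1 + β * V x) ∂η.totalVariation = (W β V η.totalVariation).toReal := by
    rw [W, integral_eq_lintegral_of_nonneg_ae (Filter.Eventually.of_forall h1')
      (measurable_const.add (hVmeas.const_mul β)).aestronglyMeasurable]
  have hbound := main n hn η.toJordanDecomposition.posPart η.toJordanDecomposition.negPart
    inferInstance inferInstance hm hWp hWq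
  have hbfin : (n : ℝ≥0∞) * ENNReal.ofReal c * ENNReal.ofReal α ^ (n - 1) *
      TT β V η.toJordanDecomposition.posPart η.toJordanDecomposition.negPart ≠ ∞ := by
    refine ENNReal.mul_ne_top (ENNReal.mul_ne_top (ENNReal.mul_ne_top (ENNReal.natCast_ne_top n)
      ENNReal.ofReal_ne_top) (ENNReal.pow_ne_top ENNReal.ofReal_ne_top)) ?_
    rw [hTTpq]
    exact hWtv
  calc sigmaS β V (sbind (kpow (P θ) n) η - sbind (kpow (P θ') n) η)
      = sigmaB β V
        (η.toJordanDecomposition.posPart.bind ⇑(kpow (P θ) n) +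
          η.toJordanDecomposition.negPart.bind ⇑(kpow (P θ') n))
        (η.toJordanDecomposition.negPart.bind ⇑(kpow (P θ) n) +
          η.toJordanDecomposition.posPart.bind ⇑(kpow (P θ') n)) := by
        rw [sigmaS, hξ]
        rfl
    _ = (TT β V
        (η.toJordanDecomposition.posPart.bind ⇑(kpow (P θ) n) +
          η.toJordanDecomposition.negPart.bind ⇑(kpow (P θ') n))
        (η.toJordanDecomposition.negPart.bind ⇑(kpow (P θ) n) +
          η.toJordanDecomposition.posPart.bind ⇑(kpow (P θ') n))).toReal := by
        rw [sigmaB_eq_toReal hVmeas h1']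
    _ ≤ ((n : ℝ≥0∞) * ENNReal.ofReal c * ENNReal.ofReal α ^ (n - 1) *
        TT β V η.toJordanDecomposition.posPart η.toJordanDecomposition.negPart).toReal :=
        ENNReal.toReal_mono hbfin hbound
    _ = (n : ℝ) * c * α ^ (n - 1) * (W β V η.totalVariation).toReal := by
        rw [hTTpq, ENNReal.toReal_mul, ENNReal.toReal_mul, ENNReal.toReal_mul,
          ENNReal.toReal_natCast, ENNReal.toReal_ofReal hc0, ENNReal.toReal_pow,
          ENNReal.toReal_ofReal hα0]
    _ = L_P * ‖θ.1 - θ'.1‖ * (n : ℝ) * α ^ (n - 1) *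
        ∫ x, (1 + β * V x) ∂η.totalVariation := by
        rw [hI, hc]
        ring

end PoissonPaper
end
end

section
/- Set α' = max(1 + βK₁, γ₁), α = α_r^{1/r} and C = α_r^{−1}(α')^{r−1}. Then for every θ ∈ Θ, every integer n ≥ 1, and every measurable φ : X → ℝ with |||φ|||_β < ∞, one has |||P_θ^{*n} φ|||_β ≤ C α^n |||φ|||_β. -/
open MeasureTheory ProbabilityTheory ENNReal

noncomputable section

namespace PoissonPaper

variable {X : Type*} [MeasurableSpace X]

section Aux

variable {β : ℝ} {V : X → ℝ}

lemma dBeta_pos (hβ : 0 < β) (hV0 : ∀ x, 0 ≤ V x) {x y : X} (h : x ≠ y) :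
    0 < dBeta β V x y := by
  simp only [dBeta, if_neg h]
  have := hV0 x; have := hV0 y; nlinarith

lemma dBeta_le (hβ : 0 < β) (hV0 : ∀ x, 0 ≤ V x) (x y : X) :
    dBeta β V x y ≤ 2 + β * V x + β * V y := by
  unfold dBeta
  split
  · have := hV0 x; have := hV0 y; nlinarith
  · exact le_rfl

lemma abs_sub_le_osc (hβ : 0 < β) (hV0 : ∀ x, 0 ≤ V x) {φ : X → ℝ}
    (hφ : osc β V φ < ⊤) (x y : X) :
    |φ x - φ y| ≤ (osc β V φ).toReal * dBeta β V x y := by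
  rcases eq_or_ne x y with rfl | hxy
  · simp [dBeta]
  · have hd := dBeta_pos hβ hV0 hxy
    have h1 : ENNReal.ofReal (|φ x - φ y| / dBeta β V x y) ≤ osc β V φ :=
      le_iSup₂ (f := fun x y => ENNReal.ofReal (|φ x - φ y| / dBeta β V x y)) x y
    rw [← ENNReal.ofReal_toReal hφ.ne] at h1
    have h2 : |φ x - φ y| / dBeta β V x y ≤ (osc β V φ).toReal :=
      (ENNReal.ofReal_le_ofReal_iff ENNReal.toReal_nonneg).mp h1
    calc |φ x - φ y| = (|φ x - φ y| / dBeta β V x y) * dBeta β V x y := by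
          field_simp
      _ ≤ (osc β V φ).toReal * dBeta β V x y :=
          mul_le_mul_of_nonneg_right h2 hd.le

lemma osc_le_of_forall {ψ : X → ℝ} {t : ℝ} (hβ : 0 < β) (hV0 : ∀ x, 0 ≤ V x)
    (h : ∀ x y, x ≠ y → |ψ x - ψ y| ≤ t * dBeta β V x y) :
    osc β V ψ ≤ ENNReal.ofReal t := by
  refine iSup_le fun x => iSup_le fun y => ?_
  rcases eq_or_ne x y with rfl | hxy
  · simp [dBeta]
  · have hd := dBeta_pos hβ hV0 hxy
    exact ENNReal.ofReal_le_ofReal ((div_le_iff₀ hd).mpr (h x y hxy))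

lemma V_integrable {μ : Measure X} [IsFiniteMeasure μ] (hVmeas : Measurable V)
    (hV0 : ∀ x, 0 ≤ V x) {c : ℝ} (hc : 0 ≤ c)
    (h : ∫⁻ y, ENNReal.ofReal (V y) ∂μ ≤ ENNReal.ofReal c) :
    Integrable V μ ∧ ∫ y, V y ∂μ ≤ c := by
  have hint : Integrable V μ := by
    refine ⟨hVmeas.aestronglyMeasurable, ?_⟩
    rw [hasFiniteIntegral_iff_ofReal (Filter.Eventually.of_forall hV0)]
    exact lt_of_le_of_lt h ENNReal.ofReal_lt_top
  refine ⟨hint, ?_⟩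
  rw [integral_eq_lintegral_of_nonneg_ae (Filter.Eventually.of_forall hV0)
    hVmeas.aestronglyMeasurable]
  calc (∫⁻ y, ENNReal.ofReal (V y) ∂μ).toReal
      ≤ (ENNReal.ofReal c).toReal := ENNReal.toReal_mono ENNReal.ofReal_ne_top h
    _ = c := ENNReal.toReal_ofReal hc

lemma phi_integrable {μ : Measure X} [IsProbabilityMeasure μ] (hβ : 0 < β)
    (hV0 : ∀ x, 0 ≤ V x) {φ : X → ℝ} (hφm : Measurable φ) (hφ : osc β V φ < ⊤)
    (hVint : Integrable V μ) (x₀ : X) : Integrable φ μ := by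
  set M := (osc β V φ).toReal with hM
  have hM0 : 0 ≤ M := ENNReal.toReal_nonneg
  refine Integrable.mono' ((integrable_const (|φ x₀| + M * (2 + β * V x₀))).add
    (hVint.const_mul (M * β))) hφm.aestronglyMeasurable (Filter.Eventually.of_forall fun u => ?_)
  have h1 := abs_sub_le_osc hβ hV0 hφ u x₀
  rw [← hM] at h1
  have h2 : dBeta β V u x₀ ≤ 2 + β * V u + β * V x₀ := dBeta_le hβ hV0 u x₀
  have h3 : M * dBeta β V u x₀ ≤ M * (2 + β * V u + β * V x₀) :=
    mul_le_mul_of_nonneg_left h2 hM0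
  have h4 : |φ u| - |φ x₀| ≤ |φ u - φ x₀| := abs_sub_abs_le_abs_sub _ _
  simp only [Real.norm_eq_abs, Pi.add_apply]
  nlinarith

/-- One-step oscillation bound. -/
lemma osc_one_step (P : Kernel X X) [IsMarkovKernel P] (hVmeas : Measurable V)
    (hV0 : ∀ x, 0 ≤ V x) (hβ : 0 < β)
    {γ₁ K₁ : ℝ} (hγ₁ : 1 < γ₁) (hK₁ : 0 ≤ K₁) (hgrow : Drift P V γ₁ K₁)
    {α' : ℝ} (hα1 : 1 + β * K₁ ≤ α') (hα2 : γ₁ ≤ α')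
    {φ : X → ℝ} (hφm : Measurable φ) (hφ : osc β V φ < ⊤) :
    Measurable (act P φ) ∧ osc β V (act P φ) ≤ ENNReal.ofReal α' * osc β V φ := by
  have hmeas : Measurable (act P φ) := by
    have : StronglyMeasurable (Function.uncurry fun (_ : X) (y : X) => φ y) :=
      (hφm.comp measurable_snd).stronglyMeasurable
    exact (StronglyMeasurable.integral_kernel_prod_right (κ := P) this).measurable
  refine ⟨hmeas, ?_⟩
  set M := (osc β V φ).toReal with hMdef
  have hM0 : 0 ≤ M := ENNReal.toReal_nonneg
  have hα'0 : 0 ≤ α' := by linarith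
  have hVb : ∀ z : X, Integrable V (P z) ∧ ∫ v, V v ∂(P z) ≤ γ₁ * V z + K₁ := fun z =>
    V_integrable hVmeas hV0 (by nlinarith [hV0 z]) (hgrow z)
  have hφint : ∀ z : X, Integrable φ (P z) := fun z =>
    phi_integrable hβ hV0 hφm hφ (hVb z).1 z
  have key : ∀ x y : X, x ≠ y → |act P φ x - act P φ y| ≤ (α' * M) * dBeta β V x y := by
    intro x y hxy
    set c := act P φ y with hc
    -- pointwise bound on |φ u - c|
    have hpt : ∀ u : X, |φ u - c| ≤ M * (2 + β * (γ₁ * V y + K₁)) + (M * β) * V u := by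
      intro u
      have e1 : φ u - c = ∫ v, (φ u - φ v) ∂(P y) := by
        rw [integral_sub (integrable_const _) (hφint y), integral_const]
        simp [hc, act]
      have e2 : |φ u - c| ≤ ∫ v, |φ u - φ v| ∂(P y) := by
        rw [e1]
        simpa [Real.norm_eq_abs] using
          norm_integral_le_integral_norm (μ := P y) (fun v => φ u - φ v)
      have e3 : ∫ v, |φ u - φ v| ∂(P y)
          ≤ ∫ v, (M * (2 + β * V u) + (M * β) * V v) ∂(P y) := by
        refine integral_mono ((integrable_const (φ u)).sub (hφint y)).abs
          ((integrable_const _).add ((hVb y).1.const_mul _)) fun v => ?_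
        have h1 := abs_sub_le_osc hβ hV0 hφ u v
        rw [← hMdef] at h1
        have h2 := dBeta_le hβ hV0 u v
        have h3 : M * dBeta β V u v ≤ M * (2 + β * V u + β * V v) :=
          mul_le_mul_of_nonneg_left h2 hM0
        calc |φ u - φ v| ≤ M * dBeta β V u v := h1
          _ ≤ M * (2 + β * V u + β * V v) := h3
          _ = M * (2 + β * V u) + (M * β) * V v := by ring
      have e4 : ∫ v, (M * (2 + β * V u) + (M * β) * V v) ∂(P y)
          = M * (2 + β * V u) + (M * β) * ∫ v, V v ∂(P y) := by
        rw [integral_add (integrable_const _) ((hVb y).1.const_mul _),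
          integral_const, integral_const_mul]
        simp
      have e5 : (M * β) * ∫ v, V v ∂(P y) ≤ (M * β) * (γ₁ * V y + K₁) :=
        mul_le_mul_of_nonneg_left (hVb y).2 (by positivity)
      have := e2.trans (e3.trans_eq e4)
      nlinarith
    have e6 : act P φ x - c = ∫ u, (φ u - c) ∂(P x) := by
      rw [integral_sub (hφint x) (integrable_const _), integral_const]
      simp [act]
    have e7 : |act P φ x - c| ≤ ∫ u, |φ u - c| ∂(P x) := by
      rw [e6]
      simpa [Real.norm_eq_abs] using
        norm_integral_le_integral_norm (μ := P x) (fun u => φ u - c)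
    have e8 : ∫ u, |φ u - c| ∂(P x)
        ≤ ∫ u, (M * (2 + β * (γ₁ * V y + K₁)) + (M * β) * V u) ∂(P x) :=
      integral_mono ((hφint x).sub (integrable_const _)).abs
        ((integrable_const _).add ((hVb x).1.const_mul _)) hpt
    have e9 : ∫ u, (M * (2 + β * (γ₁ * V y + K₁)) + (M * β) * V u) ∂(P x)
        = M * (2 + β * (γ₁ * V y + K₁)) + (M * β) * ∫ u, V u ∂(P x) := by
      rw [integral_add (integrable_const _) ((hVb x).1.const_mul _),
        integral_const, integral_const_mul]
      simp
    have e10 : (M * β) * ∫ u, V u ∂(P x) ≤ (M * β) * (γ₁ * V x + K₁) :=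
      mul_le_mul_of_nonneg_left (hVb x).2 (by positivity)
    have hbig : |act P φ x - c|
        ≤ M * (2 + β * (γ₁ * V y + K₁)) + (M * β) * (γ₁ * V x + K₁) := by
      have := e7.trans (e8.trans_eq e9)
      linarith
    -- scalar comparison
    have hd : dBeta β V x y = 2 + β * V x + β * V y := by simp [dBeta, hxy]
    rw [hd]
    have hVx := hV0 x; have hVy := hV0 y
    have s1 : M * (2 + 2 * (β * K₁)) ≤ M * (2 * α') := by nlinarith
    have s2 : M * (γ₁ * (β * V x)) ≤ M * (α' * (β * V x)) :=
      mul_le_mul_of_nonneg_left (mul_le_mul_of_nonneg_right hα2 (by positivity)) hM0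
    have s3 : M * (γ₁ * (β * V y)) ≤ M * (α' * (β * V y)) :=
      mul_le_mul_of_nonneg_left (mul_le_mul_of_nonneg_right hα2 (by positivity)) hM0
    nlinarith [hbig, s1, s2, s3]
  exact (osc_le_of_forall hβ hV0 key).trans_eq (by
    rw [ENNReal.ofReal_mul hα'0, hMdef, ENNReal.ofReal_toReal hφ.ne])

lemma osc_iterate (P : Kernel X X) [IsMarkovKernel P] (hVmeas : Measurable V)
    (hV0 : ∀ x, 0 ≤ V x) (hβ : 0 < β)
    {γ₁ K₁ : ℝ} (hγ₁ : 1 < γ₁) (hK₁ : 0 ≤ K₁) (hgrow : Drift P V γ₁ K₁)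
    {α' : ℝ} (hα1 : 1 + β * K₁ ≤ α') (hα2 : γ₁ ≤ α')
    {φ : X → ℝ} (hφm : Measurable φ) (hφ : osc β V φ < ⊤) :
    ∀ m : ℕ, Measurable ((act P)^[m] φ) ∧
      osc β V ((act P)^[m] φ) ≤ ENNReal.ofReal (α' ^ m) * osc β V φ := by
  have hα'0 : 0 ≤ α' := by linarith
  intro m
  induction m with
  | zero => exact ⟨by simpa using hφm, by simp⟩
  | succ m ih =>
    have hfin : osc β V ((act P)^[m] φ) < ⊤ :=
      ih.2.trans_lt (ENNReal.mul_lt_top ENNReal.ofReal_lt_top hφ)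
    obtain ⟨hm, hosc'⟩ :=
      osc_one_step P hVmeas hV0 hβ hγ₁ hK₁ hgrow hα1 hα2 ih.1 hfin
    rw [Function.iterate_succ_apply']
    refine ⟨hm, ?_⟩
    calc osc β V (act P ((act P)^[m] φ))
        ≤ ENNReal.ofReal α' * osc β V ((act P)^[m] φ) := hosc'
      _ ≤ ENNReal.ofReal α' * (ENNReal.ofReal (α' ^ m) * osc β V φ) :=
          mul_le_mul_right ih.2 _
      _ = ENNReal.ofReal (α' ^ (m + 1)) * osc β V φ := by
          rw [← mul_assoc, ← ENNReal.ofReal_mul hα'0]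
          congr 2
          ring

end Aux

/-- Geometric decay of the oscillation seminorm of the iterates, under
the `r`-step contraction and a one-step growth condition. -/
theorem iterated_oscillation_quasi_contraction
    {X : Type*} [MeasurableSpace X] {k : ℕ} {Θ : Set (EuclideanSpace ℝ (Fin k))}
    (hΘ : Θ.Nonempty) (P : Θ → Kernel X X) [∀ θ, IsMarkovKernel (P θ)]
    (V : X → ℝ) (hVmeas : Measurable V) (hV0 : ∀ x, 0 ≤ V x)
    (β : ℝ) (hβ : 0 < β)
    (γ₁ K₁ : ℝ) (hγ₁ : 1 < γ₁) (hK₁ : 0 ≤ K₁) (hgrow : ∀ θ, Drift (P θ) V γ₁ K₁)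
    (r : ℕ) (hr : 0 < r)
    (α_r : ℝ) (hαr : α_r ∈ Set.Ioo (0:ℝ) 1)
    (hosc_r : ∀ θ, ∀ φ : X → ℝ, Measurable φ → osc β V φ < ⊤ →
      osc β V ((act (P θ))^[r] φ) ≤ ENNReal.ofReal α_r * osc β V φ)
    (α' α C : ℝ) (hα' : α' = max (1 + β * K₁) γ₁)
    (hα : α = α_r ^ ((1:ℝ) / (r:ℝ))) (hC : C = α_r⁻¹ * α' ^ (r - 1)) :
    ∀ θ, ∀ n : ℕ, 1 ≤ n → ∀ φ : X → ℝ, Measurable φ → osc β V φ < ⊤ →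
      osc β V ((act (P θ))^[n] φ) ≤ ENNReal.ofReal (C * α ^ n) * osc β V φ := by
  intro θ n hn φ hφm hφ
  obtain ⟨hαr0, hαr1⟩ := hαr
  have hα'1 : 1 + β * K₁ ≤ α' := hα' ▸ le_max_left _ _
  have hα'2 : γ₁ ≤ α' := hα' ▸ le_max_right _ _
  have hα'ge1 : 1 ≤ α' := le_trans hγ₁.le hα'2
  have iter := fun (ψ : X → ℝ) (hψm : Measurable ψ) (hψ : osc β V ψ < ⊤) =>
    osc_iterate (P θ) hVmeas hV0 hβ hγ₁ hK₁ (hgrow θ) hα'1 hα'2 hψm hψ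
  -- block estimate along multiples of r
  have blocks : ∀ q : ℕ, Measurable ((act (P θ))^[q * r] φ) ∧
      osc β V ((act (P θ))^[q * r] φ) < ⊤ ∧
      osc β V ((act (P θ))^[q * r] φ) ≤ ENNReal.ofReal (α_r ^ q) * osc β V φ := by
    intro q
    induction q with
    | zero => exact ⟨by simpa using hφm, by simpa using hφ, by simp⟩
    | succ q ih =>
      have heq : (act (P θ))^[(q + 1) * r] φ = (act (P θ))^[r] ((act (P θ))^[q * r] φ) := by
        rw [← Function.iterate_add_apply]
        congr 1
        ring
      have hmeas : Measurable ((act (P θ))^[(q + 1) * r] φ) := by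
        rw [heq]; exact (iter _ ih.1 ih.2.1 r).1
      have hosc : osc β V ((act (P θ))^[(q + 1) * r] φ)
          ≤ ENNReal.ofReal (α_r ^ (q + 1)) * osc β V φ := by
        rw [heq]
        calc osc β V ((act (P θ))^[r] ((act (P θ))^[q * r] φ))
            ≤ ENNReal.ofReal α_r * osc β V ((act (P θ))^[q * r] φ) :=
              hosc_r θ _ ih.1 ih.2.1
          _ ≤ ENNReal.ofReal α_r * (ENNReal.ofReal (α_r ^ q) * osc β V φ) :=
              mul_le_mul_right ih.2.2 _
          _ = ENNReal.ofReal (α_r ^ (q + 1)) * osc β V φ := by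
              rw [← mul_assoc, ← ENNReal.ofReal_mul hαr0.le]
              congr 2
              ring
      exact ⟨hmeas, hosc.trans_lt (ENNReal.mul_lt_top ENNReal.ofReal_lt_top hφ), hosc⟩
  set q := n / r with hq
  set s := n % r with hs'
  have hs : s < r := Nat.mod_lt _ hr
  have hnq : n = s + r * q := (Nat.mod_add_div n r).symm
  have heq : (act (P θ))^[n] φ = (act (P θ))^[s] ((act (P θ))^[q * r] φ) := by
    rw [← Function.iterate_add_apply]
    congr 1
    rw [hnq]; ring
  -- the scalar inequality
  have hr' : (0:ℝ) < (r:ℝ) := by exact_mod_cast hr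
  have hαn : α ^ n = α_r ^ ((n:ℝ) / (r:ℝ)) := by
    rw [hα, ← Real.rpow_natCast (α_r ^ ((1:ℝ)/(r:ℝ))) n, ← Real.rpow_mul hαr0.le]
    congr 1
    field_simp
  have hlt : n ≤ (q + 1) * r := by
    calc n = s + r * q := hnq
      _ ≤ r + r * q := by omega
      _ = (q + 1) * r := by ring
  have h1 : α_r ^ (q + 1) ≤ α ^ n := by
    rw [hαn, ← Real.rpow_natCast α_r (q + 1)]
    apply Real.rpow_le_rpow_of_exponent_ge hαr0 hαr1.le
    rw [div_le_iff₀ hr']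
    exact_mod_cast hlt
  have h2 : α' ^ s ≤ α' ^ (r - 1) := pow_le_pow_right₀ hα'ge1 (by omega)
  have hmul : α' ^ s * α_r ^ (q + 1) ≤ α' ^ (r - 1) * α ^ n :=
    mul_le_mul h2 h1 (by positivity) (by positivity)
  have hscal : α' ^ s * α_r ^ q ≤ C * α ^ n := by
    have e : α' ^ s * α_r ^ q = α_r⁻¹ * (α' ^ s * α_r ^ (q + 1)) := by
      rw [pow_succ]
      field_simp
    rw [e, hC]
    calc α_r⁻¹ * (α' ^ s * α_r ^ (q + 1))
        ≤ α_r⁻¹ * (α' ^ (r - 1) * α ^ n) :=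
          mul_le_mul_of_nonneg_left hmul (by positivity)
      _ = α_r⁻¹ * α' ^ (r - 1) * α ^ n := by ring
  -- put everything together
  obtain ⟨hbm, hbfin, hbosc⟩ := blocks q
  calc osc β V ((act (P θ))^[n] φ)
      = osc β V ((act (P θ))^[s] ((act (P θ))^[q * r] φ)) := by rw [heq]
    _ ≤ ENNReal.ofReal (α' ^ s) * osc β V ((act (P θ))^[q * r] φ) :=
        (iter _ hbm hbfin s).2
    _ ≤ ENNReal.ofReal (α' ^ s) * (ENNReal.ofReal (α_r ^ q) * osc β V φ) :=
        mul_le_mul_right hbosc _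
    _ = ENNReal.ofReal (α' ^ s * α_r ^ q) * osc β V φ := by
        rw [← mul_assoc, ← ENNReal.ofReal_mul (by positivity)]
    _ ≤ ENNReal.ofReal (C * α ^ n) * osc β V φ :=
        mul_le_mul_left (ENNReal.ofReal_le_ofReal hscal) _

end PoissonPaper
end
end
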